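/- arXiv:2007.14764 — 5 statements merged into one kernel-verified Lean document; each statement's English description precedes it below -/
import Mathlib

section
/- Let n ≥ 2 and let φ : ℂⁿ → ℝ be a smooth function such that {z ∈ ℂⁿ : φ(z) > 0} is nonempty. Then for each j ∈ {1,…,n} the function z ↦ (1 + |z|²)(∂φ/∂z̄_j + z_j Σ_{l=1}^n z̄_l ∂φ/∂z̄_l) is holomorphic on ℂⁿ if and only if there exist a Hermitian n×n matrix (c_{jk}), complex constants α_1,…,α_n, and a real constant γ such that (1 + |z|²) φ(z) = Σ_{j,k} c_{jk} z_j z̄_k + Re(Σ_k α_k z_k) + γ on ℂⁿ. (The displayed function is the j-th component of (∂̄φ)^♯ with respect to the Fubini–Study metric h_{j k̄} = ∂_j ∂_{k̄} log(1 + |z|²) on ℂⁿ, and its holomorphicity characterizes when the conformal metric g = φ^{-1} h on {φ > 0} has holomorphic torsion.) -/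
open Complex MeasureTheory Finset

noncomputable section

/-- The Wirtinger derivative `∂f/∂z̄ₖ` of a (real-differentiable) function
`f : ℂⁿ → ℂ`, namely `½(∂f/∂xₖ + i ∂f/∂yₖ)`. -/
def wirtZBar {n : ℕ} (f : (Fin n → ℂ) → ℂ) (k : Fin n) (z : Fin n → ℂ) : ℂ :=
  (1 / 2 : ℂ) *
    (fderiv ℝ f z (Pi.single k 1) + Complex.I * fderiv ℝ f z (Pi.single k Complex.I))

/-- The Wirtinger derivative `∂ψ/∂z̄ₖ` of a real-valued function. -/
def wirtZBarR {n : ℕ} (ψ : (Fin n → ℂ) → ℝ) (k : Fin n) (z : Fin n → ℂ) : ℂ :=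
  wirtZBar (fun w => (ψ w : ℂ)) k z

/-- `|z|² = Σ |zₖ|²` for `z ∈ ℂⁿ`. -/
def normSq' {n : ℕ} (z : Fin n → ℂ) : ℝ := ∑ i, Complex.normSq (z i)

namespace S5

variable {n : ℕ}

/-- directional derivative -/
def pd (v : Fin n → ℂ) (f : (Fin n → ℂ) → ℂ) (z : Fin n → ℂ) : ℂ := fderiv ℝ f z v

/-- `∂/∂z_k` -/
def wirtZ (f : (Fin n → ℂ) → ℂ) (k : Fin n) (z : Fin n → ℂ) : ℂ :=
  (1 / 2 : ℂ) * (pd (Pi.single k 1) f z - Complex.I * pd (Pi.single k Complex.I) f z)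

lemma wirtZBar_def (f : (Fin n → ℂ) → ℂ) (k : Fin n) (z : Fin n → ℂ) :
    wirtZBar f k z =
      (1 / 2 : ℂ) * (pd (Pi.single k 1) f z + Complex.I * pd (Pi.single k Complex.I) f z) := rfl

abbrev Sm (f : (Fin n → ℂ) → ℂ) : Prop := ContDiff ℝ (⊤ : ℕ∞) f

section pdlemmas

variable {f g : (Fin n → ℂ) → ℂ} {z v w : Fin n → ℂ}

lemma pd_add (hf : DifferentiableAt ℝ f z) (hg : DifferentiableAt ℝ g z) :
    pd v (fun y => f y + g y) z = pd v f z + pd v g z := by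
  unfold pd; rw [fderiv_fun_add hf hg]; rfl

lemma pd_sub (hf : DifferentiableAt ℝ f z) (hg : DifferentiableAt ℝ g z) :
    pd v (fun y => f y - g y) z = pd v f z - pd v g z := by
  unfold pd; rw [fderiv_fun_sub hf hg]; rfl

lemma pd_const (c : ℂ) : pd v (fun _ => c) z = 0 := by
  unfold pd; rw [fderiv_fun_const]; rfl

lemma pd_sum {ι : Type*} {s : Finset ι} {A : ι → (Fin n → ℂ) → ℂ}
    (h : ∀ i ∈ s, DifferentiableAt ℝ (A i) z) :
    pd v (fun y => ∑ i ∈ s, A i y) z = ∑ i ∈ s, pd v (A i) z := by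
  unfold pd; rw [fderiv_fun_sum h]; simp

lemma pd_mul (hf : DifferentiableAt ℝ f z) (hg : DifferentiableAt ℝ g z) :
    pd v (fun y => f y * g y) z = f z * pd v g z + g z * pd v f z := by
  unfold pd; rw [fderiv_fun_mul hf hg]; simp [smul_eq_mul]

lemma pd_const_mul (hf : DifferentiableAt ℝ f z) (c : ℂ) :
    pd v (fun y => c * f y) z = c * pd v f z := by
  unfold pd; rw [fderiv_const_mul hf]; simp [smul_eq_mul]

lemma pd_conj (hf : DifferentiableAt ℝ f z) :
    pd v (fun y => (starRingEnd ℂ) (f y)) z = (starRingEnd ℂ) (pd v f z) := by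
  unfold pd
  have h : HasFDerivAt (fun y => (starRingEnd ℂ) (f y))
      ((Complex.conjCLE.toContinuousLinearMap).comp (fderiv ℝ f z)) z :=
    (Complex.conjCLE.toContinuousLinearMap.hasFDerivAt).comp z hf.hasFDerivAt
  rw [h.fderiv]; rfl

lemma pd_coord (j : Fin n) : pd v (fun y => y j) z = v j := by
  unfold pd
  have : fderiv ℝ (fun y : Fin n → ℂ => y j) z
      = (ContinuousLinearMap.proj j : (Fin n → ℂ) →L[ℝ] ℂ) :=
    (ContinuousLinearMap.proj j : (Fin n → ℂ) →L[ℝ] ℂ).fderiv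
  rw [this]; rfl

lemma diff_coord (j : Fin n) : Differentiable ℝ (fun y : Fin n → ℂ => y j) :=
  (ContinuousLinearMap.proj j : (Fin n → ℂ) →L[ℝ] ℂ).differentiable

lemma sm_coord (j : Fin n) : Sm (fun y : Fin n → ℂ => y j) :=
  (ContinuousLinearMap.proj j : (Fin n → ℂ) →L[ℝ] ℂ).contDiff

lemma sm_conj (hf : Sm f) : Sm (fun y => (starRingEnd ℂ) (f y)) :=
  Complex.conjCLE.toContinuousLinearMap.contDiff.comp hf

lemma sm_coord_conj (j : Fin n) : Sm (fun y : Fin n → ℂ => (starRingEnd ℂ) (y j)) :=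
  sm_conj (sm_coord j)

lemma pd_coord_conj (j : Fin n) :
    pd v (fun y => (starRingEnd ℂ) (y j)) z = (starRingEnd ℂ) (v j) := by
  rw [pd_conj ((diff_coord j).differentiableAt), pd_coord]

lemma Sm.dable (hf : Sm f) : Differentiable ℝ f := hf.differentiable (by simp)

lemma contDiff_pd (hf : Sm f) : Sm (pd v f) := by
  have h : ContDiff ℝ (⊤ : ℕ∞) (fderiv ℝ f) := by
    exact hf.fderiv_right (le_of_eq (by exact_mod_cast rfl))
  exact h.clm_apply contDiff_const

lemma pd_comm (hf : Sm f) : pd v (pd w f) z = pd w (pd v f) z := by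
  have hsymm : IsSymmSndFDerivAt ℝ f z :=
    (hf.contDiffAt).isSymmSndFDerivAt (by rw [minSmoothness_of_isRCLikeNormedField]; exact WithTop.coe_le_coe.2 le_top)
  have hd : Differentiable ℝ (fderiv ℝ f) := by
    exact (hf.fderiv_right (m := (⊤ : ℕ∞)) (le_of_eq (by exact_mod_cast rfl))).differentiable (by simp)
  have key : ∀ a b : Fin n → ℂ, pd a (pd b f) z = fderiv ℝ (fderiv ℝ f) z a b := by
    intro a b
    unfold pd
    have : fderiv ℝ (fun y => fderiv ℝ f y b) z
        = ((fderiv ℝ f z).comp (fderiv ℝ (fun _ : Fin n → ℂ => b) z)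
            + (fderiv ℝ (fderiv ℝ f) z).flip b) :=
      fderiv_clm_apply (hd.differentiableAt) (differentiableAt_const b)
    rw [this]
    simp
  rw [key v w, key w v]
  exact hsymm v w

end pdlemmas

end S5

namespace S5

variable {n : ℕ}

section wirtlemmas

variable {f g : (Fin n → ℂ) → ℂ} {z v w : Fin n → ℂ} {j k : Fin n}

lemma wirtZ_def (f : (Fin n → ℂ) → ℂ) (k : Fin n) (z : Fin n → ℂ) :
    wirtZ f k z =
      (1 / 2 : ℂ) * (pd (Pi.single k 1) f z - Complex.I * pd (Pi.single k Complex.I) f z) := rfl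

lemma wirtZBar_add (hf : DifferentiableAt ℝ f z) (hg : DifferentiableAt ℝ g z) :
    wirtZBar (fun y => f y + g y) k z = wirtZBar f k z + wirtZBar g k z := by
  simp only [wirtZBar_def, pd_add hf hg]; ring

lemma wirtZBar_sub (hf : DifferentiableAt ℝ f z) (hg : DifferentiableAt ℝ g z) :
    wirtZBar (fun y => f y - g y) k z = wirtZBar f k z - wirtZBar g k z := by
  simp only [wirtZBar_def, pd_sub hf hg]; ring

lemma wirtZBar_const (c : ℂ) : wirtZBar (fun _ : Fin n → ℂ => c) k z = 0 := by
  simp only [wirtZBar_def, pd_const]; ring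

lemma wirtZBar_sum {ι : Type*} {s : Finset ι} {A : ι → (Fin n → ℂ) → ℂ}
    (h : ∀ i ∈ s, DifferentiableAt ℝ (A i) z) :
    wirtZBar (fun y => ∑ i ∈ s, A i y) k z = ∑ i ∈ s, wirtZBar (A i) k z := by
  simp only [wirtZBar_def, pd_sum h, Finset.mul_sum, Finset.sum_add_distrib, mul_add]

lemma wirtZBar_mul (hf : DifferentiableAt ℝ f z) (hg : DifferentiableAt ℝ g z) :
    wirtZBar (fun y => f y * g y) k z = f z * wirtZBar g k z + g z * wirtZBar f k z := by
  simp only [wirtZBar_def, pd_mul hf hg]; ring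

lemma wirtZBar_const_mul (hf : DifferentiableAt ℝ f z) (c : ℂ) :
    wirtZBar (fun y => c * f y) k z = c * wirtZBar f k z := by
  simp only [wirtZBar_def, pd_const_mul hf]; ring

lemma wirtZ_add (hf : DifferentiableAt ℝ f z) (hg : DifferentiableAt ℝ g z) :
    wirtZ (fun y => f y + g y) k z = wirtZ f k z + wirtZ g k z := by
  simp only [wirtZ_def, pd_add hf hg]; ring

lemma wirtZ_sub (hf : DifferentiableAt ℝ f z) (hg : DifferentiableAt ℝ g z) :
    wirtZ (fun y => f y - g y) k z = wirtZ f k z - wirtZ g k z := by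
  simp only [wirtZ_def, pd_sub hf hg]; ring

lemma wirtZ_const (c : ℂ) : wirtZ (fun _ : Fin n → ℂ => c) k z = 0 := by
  simp only [wirtZ_def, pd_const]; ring

lemma wirtZ_sum {ι : Type*} {s : Finset ι} {A : ι → (Fin n → ℂ) → ℂ}
    (h : ∀ i ∈ s, DifferentiableAt ℝ (A i) z) :
    wirtZ (fun y => ∑ i ∈ s, A i y) k z = ∑ i ∈ s, wirtZ (A i) k z := by
  simp only [wirtZ_def, pd_sum h, Finset.mul_sum, mul_sub, Finset.sum_sub_distrib]

lemma wirtZ_mul (hf : DifferentiableAt ℝ f z) (hg : DifferentiableAt ℝ g z) :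
    wirtZ (fun y => f y * g y) k z = f z * wirtZ g k z + g z * wirtZ f k z := by
  simp only [wirtZ_def, pd_mul hf hg]; ring

lemma wirtZ_const_mul (hf : DifferentiableAt ℝ f z) (c : ℂ) :
    wirtZ (fun y => c * f y) k z = c * wirtZ f k z := by
  simp only [wirtZ_def, pd_const_mul hf]; ring

lemma wirtZBar_conj (hf : DifferentiableAt ℝ f z) :
    wirtZBar (fun y => (starRingEnd ℂ) (f y)) k z = (starRingEnd ℂ) (wirtZ f k z) := by
  simp only [wirtZBar_def, wirtZ_def, pd_conj hf, map_mul, map_sub, map_add, map_one,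
    map_div₀, map_ofNat, Complex.conj_I]
  ring

lemma wirtZ_conj (hf : DifferentiableAt ℝ f z) :
    wirtZ (fun y => (starRingEnd ℂ) (f y)) k z = (starRingEnd ℂ) (wirtZBar f k z) := by
  simp only [wirtZBar_def, wirtZ_def, pd_conj hf, map_mul, map_sub, map_add, map_one,
    map_div₀, map_ofNat, Complex.conj_I]
  ring

lemma wirtZBar_coord (j : Fin n) :
    wirtZBar (fun y : Fin n → ℂ => y j) k z = 0 := by
  simp only [wirtZBar_def, pd_coord, Pi.single_apply]
  by_cases h : j = k <;> simp [h] <;> norm_num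

lemma wirtZ_coord (j : Fin n) :
    wirtZ (fun y : Fin n → ℂ => y j) k z = if j = k then 1 else 0 := by
  simp only [wirtZ_def, pd_coord, Pi.single_apply]
  by_cases h : j = k <;> simp [h] <;> norm_num

lemma wirtZBar_coord_conj (j : Fin n) :
    wirtZBar (fun y : Fin n → ℂ => (starRingEnd ℂ) (y j)) k z = if j = k then 1 else 0 := by
  simp only [wirtZBar_def, pd_coord_conj, Pi.single_apply, apply_ite (starRingEnd ℂ),
    map_one, map_zero, Complex.conj_I]
  by_cases h : j = k <;> simp [h] <;> norm_num

lemma wirtZ_coord_conj (j : Fin n) :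
    wirtZ (fun y : Fin n → ℂ => (starRingEnd ℂ) (y j)) k z = 0 := by
  simp only [wirtZ_def, pd_coord_conj, Pi.single_apply, apply_ite (starRingEnd ℂ),
    map_one, map_zero, Complex.conj_I]
  by_cases h : j = k <;> simp [h] <;> norm_num

lemma sm_wirtZBar (hf : Sm f) : Sm (wirtZBar f k) := by
  have h1 : Sm (pd (Pi.single k (1:ℂ)) f) := contDiff_pd hf
  have h2 : Sm (pd (Pi.single k Complex.I) f) := contDiff_pd hf
  exact contDiff_const.mul (h1.add (contDiff_const.mul h2))

lemma sm_wirtZ (hf : Sm f) : Sm (wirtZ f k) := by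
  have h1 : Sm (pd (Pi.single k (1:ℂ)) f) := contDiff_pd hf
  have h2 : Sm (pd (Pi.single k Complex.I) f) := contDiff_pd hf
  exact contDiff_const.mul (h1.sub (contDiff_const.mul h2))

/-- generic Wirtinger-type operator -/
def Wg (s : ℂ) (f : (Fin n → ℂ) → ℂ) (k : Fin n) (z : Fin n → ℂ) : ℂ :=
  (1 / 2 : ℂ) * (pd (Pi.single k 1) f z + s * pd (Pi.single k Complex.I) f z)

lemma wirtZBar_eq_Wg : wirtZBar f k z = Wg Complex.I f k z := rfl

lemma wirtZ_eq_Wg : wirtZ f k z = Wg (-Complex.I) f k z := by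
  simp only [wirtZ_def, Wg]; ring

lemma pd_Wg (hf : Sm f) (s : ℂ) :
    pd v (Wg s f k) z =
      (1 / 2 : ℂ) * (pd v (pd (Pi.single k 1) f) z + s * pd v (pd (Pi.single k Complex.I) f) z) := by
  have h1 : DifferentiableAt ℝ (pd (Pi.single k (1:ℂ)) f) z :=
    ((contDiff_pd hf).dable).differentiableAt
  have h2 : DifferentiableAt ℝ (pd (Pi.single k Complex.I) f) z :=
    ((contDiff_pd hf).dable).differentiableAt
  have : (Wg s f k) = fun y => (1/2 : ℂ) *
      (pd (Pi.single k 1) f y + s * pd (Pi.single k Complex.I) f y) := rfl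
  rw [this, pd_const_mul (by exact h1.add (h2.const_mul s)), pd_add h1 (h2.const_mul s),
    pd_const_mul h2]

lemma Wg_comm (hf : Sm f) (s t : ℂ) (j k : Fin n) :
    Wg s (Wg t f j) k z = Wg t (Wg s f k) j z := by
  simp only [Wg, pd_Wg hf]
  rw [pd_comm hf (v := Pi.single k 1) (w := Pi.single j 1),
    pd_comm hf (v := Pi.single k 1) (w := Pi.single j Complex.I),
    pd_comm hf (v := Pi.single k Complex.I) (w := Pi.single j 1),
    pd_comm hf (v := Pi.single k Complex.I) (w := Pi.single j Complex.I)]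
  ring

lemma wirtZBar_comm (hf : Sm f) : wirtZBar (wirtZBar f j) k z = wirtZBar (wirtZBar f k) j z := by
  have h1 : wirtZBar (wirtZBar f j) k z = Wg Complex.I (Wg Complex.I f j) k z := by
    rw [wirtZBar_eq_Wg]; congr 1
  have h2 : wirtZBar (wirtZBar f k) j z = Wg Complex.I (Wg Complex.I f k) j z := by
    rw [wirtZBar_eq_Wg]; congr 1
  rw [h1, h2, Wg_comm hf]

lemma wirtZBar_wirtZ_comm (hf : Sm f) :
    wirtZBar (wirtZ f j) k z = wirtZ (wirtZBar f k) j z := by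
  have h1 : wirtZBar (wirtZ f j) k z = Wg Complex.I (Wg (-Complex.I) f j) k z := by
    rw [wirtZBar_eq_Wg]; congr 1; funext y; exact wirtZ_eq_Wg
  have h2 : wirtZ (wirtZBar f k) j z = Wg (-Complex.I) (Wg Complex.I f k) j z := by
    rw [wirtZ_eq_Wg]; congr 1
  rw [h1, h2, Wg_comm hf]

end wirtlemmas

end S5

namespace S5

variable {n : ℕ}

section holo

variable {f : (Fin n → ℂ) → ℂ} {z : Fin n → ℂ} {k : Fin n}

lemma clm_apply_eq (L : (Fin n → ℂ) →L[ℝ] ℂ) (v : Fin n → ℂ) :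
    L v = ∑ k, ((v k).re • L (Pi.single k 1) + (v k).im • L (Pi.single k Complex.I)) := by
  have hv : v = ∑ k, ((v k).re • (Pi.single k (1:ℂ) : Fin n → ℂ) + (v k).im • (Pi.single k Complex.I : Fin n → ℂ)) := by
    funext j
    rw [Finset.sum_apply]
    rw [Finset.sum_eq_single j]
    · simp [Pi.single_eq_same, Complex.real_smul, Complex.re_add_im]
    · intro k _ hkj
      simp [Pi.single_apply, Ne.symm hkj]
    · intro h; exact absurd (Finset.mem_univ j) h
  conv_lhs => rw [hv]
  rw [_root_.map_sum]
  simp only [_root_.map_add, _root_.map_smul]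

lemma diffC_of_wirtZBar_zero (hf : DifferentiableAt ℝ f z)
    (h : ∀ k, wirtZBar f k z = 0) : DifferentiableAt ℂ f z := by
  set L := fderiv ℝ f z with hL
  have hk : ∀ k, L (Pi.single k Complex.I) = Complex.I * L (Pi.single k 1) := by
    intro k
    have h2 := h k
    rw [wirtZBar] at h2
    have h3 : L (Pi.single k 1) + Complex.I * L (Pi.single k Complex.I) = 0 := by
      field_simp at h2; rw [mul_zero] at h2; exact h2
    have hI : Complex.I * Complex.I = -1 := Complex.I_mul_I
    linear_combination (-Complex.I) * h3 + (L (Pi.single k Complex.I)) * hI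
  have hIv : ∀ v, L (Complex.I • v) = Complex.I * L v := by
    intro v
    rw [clm_apply_eq L (Complex.I • v), clm_apply_eq L v, Finset.mul_sum]
    apply Finset.sum_congr rfl
    intro k _
    have hc : (Complex.I • v) k = Complex.I * v k := rfl
    rw [hc, hk k]
    simp only [Complex.mul_re, Complex.mul_im, Complex.I_re, Complex.I_im, Complex.real_smul]
    push_cast
    have hI : Complex.I * Complex.I = -1 := Complex.I_mul_I
    linear_combination (-(((v k).im : ℂ)) * L (Pi.single k 1)) * hI
  -- build the complex-linear map
  let L' : (Fin n → ℂ) →L[ℂ] ℂ :=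
    { toFun := L
      map_add' := L.map_add
      map_smul' := by
        intro c v
        show L (c • v) = (RingHom.id ℂ) c • L v
        have hc : c = (c.re : ℂ) + (c.im : ℂ) * Complex.I := (Complex.re_add_im c).symm
        have hv : c • v = c.re • v + c.im • (Complex.I • v) := by
          funext j
          simp only [Pi.add_apply, Pi.smul_apply, Complex.real_smul, smul_eq_mul]
          linear_combination (v j) * hc
        rw [hv, L.map_add, L.map_smul, L.map_smul, hIv]
        simp only [Complex.real_smul, RingHom.id_apply, smul_eq_mul]
        linear_combination (-(L v)) * hc
      cont := L.cont }
  have : HasFDerivAt f L' z := by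
    apply hasFDerivAt_of_restrictScalars ℝ hf.hasFDerivAt
    ext v
    rfl
  exact this.differentiableAt

lemma wirtZBar_zero_of_diffC (hf : DifferentiableAt ℂ f z) (k : Fin n) :
    wirtZBar f k z = 0 := by
  rw [wirtZBar, hf.fderiv_restrictScalars ℝ]
  have hs : (Pi.single k Complex.I : Fin n → ℂ) = Complex.I • (Pi.single k (1:ℂ) : Fin n → ℂ) := by
    funext j
    simp [Pi.single_apply, Pi.smul_apply, smul_eq_mul, mul_ite]
  rw [hs]
  simp only [ContinuousLinearMap.coe_restrictScalars', _root_.map_smul, smul_eq_mul]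
  have hI : Complex.I * Complex.I = -1 := Complex.I_mul_I
  linear_combination ((1:ℂ)/2 * (fderiv ℂ f z) (Pi.single k 1)) * hI

lemma fderiv_zero_of_wirt (hf : DifferentiableAt ℝ f z)
    (h1 : ∀ k, wirtZBar f k z = 0) (h2 : ∀ k, wirtZ f k z = 0) :
    fderiv ℝ f z = 0 := by
  have he : ∀ k, fderiv ℝ f z (Pi.single k 1) = 0 := by
    intro k
    have a := h1 k; have b := h2 k
    rw [wirtZBar] at a; rw [wirtZ_def] at b; unfold pd at b
    linear_combination a + b
  have hb : ∀ k, fderiv ℝ f z (Pi.single k Complex.I) = 0 := by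
    intro k
    have a := h1 k
    rw [wirtZBar, he k, zero_add] at a
    have := mul_eq_zero.mp a
    simp only [one_div, inv_eq_zero, OfNat.ofNat_ne_zero, false_or] at this
    have := mul_eq_zero.mp this
    simpa [Complex.I_ne_zero] using this
  ext v
  rw [ContinuousLinearMap.zero_apply, clm_apply_eq]
  simp [he, hb]

lemma eq_const_of_wirt (hf : Sm f) (h1 : ∀ k z, wirtZBar f k z = 0)
    (h2 : ∀ k z, wirtZ f k z = 0) (z : Fin n → ℂ) : f z = f 0 :=
  is_const_of_fderiv_eq_zero hf.dable
    (fun y => fderiv_zero_of_wirt (hf.dable.differentiableAt) (fun k => h1 k y) (fun k => h2 k y))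
    z 0

end holo

end S5

namespace S5

variable {n : ℕ}

def Pf (z : Fin n → ℂ) : ℂ := 1 + ∑ l, z l * (starRingEnd ℂ) (z l)

def phiC (φ : (Fin n → ℂ) → ℝ) (z : Fin n → ℂ) : ℂ := (φ z : ℂ)

def Fcf (φ : (Fin n → ℂ) → ℝ) (z : Fin n → ℂ) : ℂ := Pf z * phiC φ z

def Gf (φ : (Fin n → ℂ) → ℝ) (j : Fin n) : (Fin n → ℂ) → ℂ := wirtZBar (Fcf φ) j

def Hf (φ : (Fin n → ℂ) → ℝ) (z : Fin n → ℂ) : ℂ :=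
  (∑ l, (starRingEnd ℂ) (z l) * Gf φ l z) - Fcf φ z

section main

variable {φ : (Fin n → ℂ) → ℝ}

lemma sm_Pf : Sm (Pf (n := n)) :=
  contDiff_const.add (ContDiff.sum fun l _ => (sm_coord l).mul (sm_coord_conj l))

lemma sm_phiC (hφ : ContDiff ℝ (⊤ : ℕ∞) φ) : Sm (phiC φ) :=
  Complex.ofRealCLM.contDiff.comp hφ

lemma sm_Fcf (hφ : ContDiff ℝ (⊤ : ℕ∞) φ) : Sm (Fcf φ) := sm_Pf.mul (sm_phiC hφ)

lemma sm_Gf (hφ : ContDiff ℝ (⊤ : ℕ∞) φ) {j : Fin n} : Sm (Gf φ j) :=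
  sm_wirtZBar (sm_Fcf hφ)

lemma sm_Hf (hφ : ContDiff ℝ (⊤ : ℕ∞) φ) : Sm (Hf φ) :=
  (ContDiff.sum fun l _ => (sm_coord_conj l).mul (sm_Gf hφ)).sub (sm_Fcf hφ)

lemma cast_P (z : Fin n → ℂ) : ((1 + normSq' z : ℝ) : ℂ) = Pf z := by
  unfold normSq' Pf
  push_cast
  congr 1
  exact Finset.sum_congr rfl fun l _ => (Complex.mul_conj (z l)).symm

lemma Fcf_real (z : Fin n → ℂ) : (starRingEnd ℂ) (Fcf φ z) = Fcf φ z := by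
  unfold Fcf Pf phiC
  simp only [map_mul, map_add, map_one, map_sum, Complex.conj_conj, Complex.conj_ofReal]
  rw [Finset.sum_congr rfl fun l _ => mul_comm ((starRingEnd ℂ) (z l)) (z l)]

lemma wirtZBar_Pf (j : Fin n) (z : Fin n → ℂ) : wirtZBar (Pf (n := n)) j z = z j := by
  have hds : DifferentiableAt ℝ (fun y : Fin n → ℂ => ∑ l, y l * (starRingEnd ℂ) (y l)) z :=
    (Sm.dable (ContDiff.sum fun l (_ : l ∈ Finset.univ) =>
      ((sm_coord l).mul (sm_coord_conj l)))).differentiableAt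
  unfold Pf
  rw [wirtZBar_add (differentiableAt_const _) hds, wirtZBar_const,
    wirtZBar_sum (fun l _ => (Sm.dable ((sm_coord l).mul (sm_coord_conj l))).differentiableAt),
    Finset.sum_congr rfl (fun l _ => wirtZBar_mul ((diff_coord l) z)
      ((sm_coord_conj l).dable.differentiableAt))]
  simp only [wirtZBar_coord, wirtZBar_coord_conj, mul_zero, add_zero, mul_ite, mul_one]
  rw [Finset.sum_ite_eq' Finset.univ j]
  simp

lemma Gf_eq (hφ : ContDiff ℝ (⊤ : ℕ∞) φ) (j : Fin n) (z : Fin n → ℂ) :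
    Gf φ j z = z j * phiC φ z + Pf z * wirtZBar (phiC φ) j z := by
  unfold Gf Fcf
  rw [wirtZBar_mul (sm_Pf.dable.differentiableAt) ((sm_phiC hφ).dable.differentiableAt),
    wirtZBar_Pf]
  ring

lemma V_eq (hφ : ContDiff ℝ (⊤ : ℕ∞) φ) (j : Fin n) :
    (fun z => ((1 + normSq' z : ℝ) : ℂ) *
        (wirtZBarR φ j z + z j * ∑ l, (starRingEnd ℂ) (z l) * wirtZBarR φ l z))
      = fun z => Gf φ j z + z j * Hf φ z := by
  funext z
  have hψ : ∀ l, wirtZBarR φ l z = wirtZBar (phiC φ) l z := fun l => rfl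
  rw [cast_P]
  simp only [hψ]
  unfold Hf Fcf
  simp only [Gf_eq hφ]
  have e1 : ∑ l, (starRingEnd ℂ) (z l) * (z l * phiC φ z + Pf z * wirtZBar (phiC φ) l z)
      = (∑ l, z l * (starRingEnd ℂ) (z l)) * phiC φ z
        + Pf z * ∑ l, (starRingEnd ℂ) (z l) * wirtZBar (phiC φ) l z := by
    rw [Finset.sum_mul, Finset.mul_sum, ← Finset.sum_add_distrib]
    exact Finset.sum_congr rfl fun l _ => by ring
  rw [e1]
  have hPv : Pf z = 1 + ∑ l, z l * (starRingEnd ℂ) (z l) := rfl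
  rw [hPv]
  ring

lemma wirtV (hφ : ContDiff ℝ (⊤ : ℕ∞) φ) (j k : Fin n) (z : Fin n → ℂ) :
    wirtZBar (fun y => Gf φ j y + y j * Hf φ y) k z
      = wirtZBar (Gf φ j) k z + z j * ∑ l, (starRingEnd ℂ) (z l) * wirtZBar (Gf φ l) k z := by
  have dG : ∀ l, DifferentiableAt ℝ (Gf φ l) z := fun l => (sm_Gf hφ).dable.differentiableAt
  have dH : DifferentiableAt ℝ (Hf φ) z := (sm_Hf hφ).dable.differentiableAt
  have dF : DifferentiableAt ℝ (Fcf φ) z := (sm_Fcf hφ).dable.differentiableAt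
  have hH : wirtZBar (Hf φ) k z = ∑ l, (starRingEnd ℂ) (z l) * wirtZBar (Gf φ l) k z := by
    unfold Hf
    have dsum : DifferentiableAt ℝ (fun y : Fin n → ℂ => ∑ l, (starRingEnd ℂ) (y l) * Gf φ l y) z :=
      (Sm.dable (ContDiff.sum fun l (_ : l ∈ Finset.univ) =>
        ((sm_coord_conj l).mul (sm_Gf hφ)))).differentiableAt
    rw [wirtZBar_sub dsum dF,
      wirtZBar_sum (fun l _ => (Sm.dable ((sm_coord_conj l).mul (sm_Gf hφ))).differentiableAt),
      Finset.sum_congr rfl (fun l _ =>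
        wirtZBar_mul ((sm_coord_conj l).dable.differentiableAt) (dG l))]
    have hFk : wirtZBar (Fcf φ) k z = Gf φ k z := rfl
    simp only [wirtZBar_coord_conj, hFk, mul_ite, mul_one, mul_zero]
    rw [Finset.sum_add_distrib, Finset.sum_ite_eq' Finset.univ k]
    simp
  rw [wirtZBar_add (g := fun y => y j * Hf φ y) (dG j) (((diff_coord j) z).mul dH),
    wirtZBar_mul ((diff_coord j) z) dH, wirtZBar_coord, hH]
  ring

lemma key_iff (hφ : ContDiff ℝ (⊤ : ℕ∞) φ) :
    (∀ j, Differentiable ℂ (fun z => Gf φ j z + z j * Hf φ z))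
      ↔ ∀ j k (z : Fin n → ℂ), wirtZBar (Gf φ j) k z = 0 := by
  constructor
  · intro h j k z
    have h0 : ∀ j, wirtZBar (fun y => Gf φ j y + y j * Hf φ y) k z = 0 := fun j =>
      wirtZBar_zero_of_diffC ((h j) z) k
    have heq : ∀ j, wirtZBar (Gf φ j) k z
        + z j * ∑ l, (starRingEnd ℂ) (z l) * wirtZBar (Gf φ l) k z = 0 := fun j => by
      rw [← wirtV hφ j k z]; exact h0 j
    set S := ∑ l, (starRingEnd ℂ) (z l) * wirtZBar (Gf φ l) k z with hS
    have hA : ∀ j, wirtZBar (Gf φ j) k z = -(z j * S) := fun j =>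
      eq_neg_of_add_eq_zero_left (heq j)
    have hS2 : S = (∑ l, -((starRingEnd ℂ) (z l) * z l)) * S := by
      conv_lhs => rw [hS, Finset.sum_congr rfl (fun l _ => by rw [hA l])]
      rw [Finset.sum_mul]
      exact Finset.sum_congr rfl fun l _ => by ring
    have hfac : ((1 : ℂ) - ∑ l, -((starRingEnd ℂ) (z l) * z l)) * S = 0 := by
      rw [sub_mul, one_mul, ← hS2, sub_self]
    have hne : ((1 : ℂ) - ∑ l, -((starRingEnd ℂ) (z l) * z l)) ≠ 0 := by
      have h1 : ((1 : ℂ) - ∑ l, -((starRingEnd ℂ) (z l) * z l)) = ((1 + normSq' z : ℝ) : ℂ) := by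
        rw [cast_P]
        unfold Pf
        rw [Finset.sum_neg_distrib]
        rw [sub_neg_eq_add]
        congr 1
        exact Finset.sum_congr rfl fun l _ => mul_comm _ _
      rw [h1]
      simp only [ne_eq, Complex.ofReal_eq_zero]
      have : (0:ℝ) ≤ normSq' z := Finset.sum_nonneg fun i _ => Complex.normSq_nonneg _
      intro hcon; linarith
    have hS0 : S = 0 := by
      rcases mul_eq_zero.mp hfac with h' | h'
      · exact absurd h' hne
      · exact h'
    rw [hA j, hS0, mul_zero, neg_zero]
  · intro hA j z
    apply diffC_of_wirtZBar_zero
      ((Sm.dable ((sm_Gf hφ).add ((sm_coord j).mul (sm_Hf hφ)))).differentiableAt)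
    intro k
    rw [wirtV hφ j k z]
    simp [hA]

end main

end S5

namespace S5

variable {n : ℕ} {φ : (Fin n → ℂ) → ℝ}

lemma re_cast (w : ℂ) : ((w.re : ℝ) : ℂ) = (w + (starRingEnd ℂ) w) / 2 := by
  rw [Complex.add_conj]; push_cast; ring

lemma dirA_of_formula (hφ : ContDiff ℝ (⊤ : ℕ∞) φ) (c : Matrix (Fin n) (Fin n) ℂ)
    (α : Fin n → ℂ) (γ : ℝ)
    (hfor : ∀ z : Fin n → ℂ, Fcf φ z =
      (∑ j, ∑ k, c j k * z j * (starRingEnd ℂ) (z k))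
        + (((∑ k, α k * z k).re : ℝ) : ℂ) + (γ : ℂ)) :
    ∀ j k (z : Fin n → ℂ), wirtZBar (Gf φ j) k z = 0 := by
  have hFc2 : Fcf φ = fun z =>
      (∑ j, ∑ k, c j k * z j * (starRingEnd ℂ) (z k))
        + ((1/2 : ℂ) * ((∑ k, α k * z k)
            + ∑ k, (starRingEnd ℂ) (α k) * (starRingEnd ℂ) (z k)) + (γ : ℂ)) := by
    funext z
    rw [hfor z, re_cast, map_sum]
    simp only [map_mul]
    ring
  have smQ : Sm (fun z : Fin n → ℂ => ∑ j, ∑ k, c j k * z j * (starRingEnd ℂ) (z k)) :=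
    ContDiff.sum fun j _ => ContDiff.sum fun k _ =>
      (contDiff_const.mul (sm_coord j)).mul (sm_coord_conj k)
  have smL1 : Sm (fun z : Fin n → ℂ => ∑ k, α k * z k) :=
    ContDiff.sum fun k _ => contDiff_const.mul (sm_coord k)
  have smL2 : Sm (fun z : Fin n → ℂ => ∑ k, (starRingEnd ℂ) (α k) * (starRingEnd ℂ) (z k)) :=
    ContDiff.sum fun k _ => contDiff_const.mul (sm_coord_conj k)
  have smRest : Sm (fun z : Fin n → ℂ =>
      (1/2 : ℂ) * ((∑ k, α k * z k)
        + ∑ k, (starRingEnd ℂ) (α k) * (starRingEnd ℂ) (z k)) + (γ : ℂ)) :=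
    (contDiff_const.mul (smL1.add smL2)).add contDiff_const
  have hGj : ∀ j, Gf φ j
      = fun z => (∑ j', c j' j * z j') + (1/2 : ℂ) * (starRingEnd ℂ) (α j) := by
    intro j; funext z
    unfold Gf
    rw [hFc2]
    rw [wirtZBar_add (smQ.dable.differentiableAt) (smRest.dable.differentiableAt)]
    have hterm : ∀ j' k', wirtZBar (fun z : Fin n → ℂ => c j' k' * z j' * (starRingEnd ℂ) (z k')) j z
        = if k' = j then c j' k' * z j' else 0 := by
      intro j' k'
      have d1 : DifferentiableAt ℝ (fun z : Fin n → ℂ => c j' k' * z j') z :=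
        (Sm.dable (contDiff_const.mul (sm_coord j'))).differentiableAt
      rw [wirtZBar_mul d1 ((sm_coord_conj k').dable.differentiableAt), wirtZBar_coord_conj,
        wirtZBar_const_mul ((diff_coord j') z), wirtZBar_coord]
      by_cases h : k' = j <;> simp [h]
    have hQ : wirtZBar (fun z : Fin n → ℂ => ∑ j', ∑ k', c j' k' * z j' * (starRingEnd ℂ) (z k')) j z
        = ∑ j', c j' j * z j' := by
      rw [wirtZBar_sum (A := fun j' z => ∑ k', c j' k' * z j' * (starRingEnd ℂ) (z k')) (fun j' _ => (Sm.dable (ContDiff.sum fun k' _ =>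
          (contDiff_const.mul (sm_coord j')).mul (sm_coord_conj k'))).differentiableAt)]
      rw [Finset.sum_congr rfl (fun j' _ => wirtZBar_sum (A := fun k' z => c j' k' * z j' * (starRingEnd ℂ) (z k')) (fun k' _ =>
        (Sm.dable ((contDiff_const.mul (sm_coord j')).mul (sm_coord_conj k'))).differentiableAt))]
      rw [Finset.sum_congr rfl (fun j' _ => Finset.sum_congr rfl (fun k' _ => hterm j' k'))]
      rw [Finset.sum_congr rfl (fun j' _ => Finset.sum_ite_eq' Finset.univ j
        (fun k' => c j' k' * z j'))]
      simp
    have ht1 : ∀ k', wirtZBar (fun z : Fin n → ℂ => α k' * z k') j z = 0 := by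
      intro k'
      rw [wirtZBar_const_mul ((diff_coord k') z), wirtZBar_coord, mul_zero]
    have ht2 : ∀ k', wirtZBar (fun z : Fin n → ℂ =>
        (starRingEnd ℂ) (α k') * (starRingEnd ℂ) (z k')) j z
        = if k' = j then (starRingEnd ℂ) (α k') else 0 := by
      intro k'
      rw [wirtZBar_const_mul ((sm_coord_conj k').dable.differentiableAt), wirtZBar_coord_conj]
      by_cases h : k' = j <;> simp [h]
    have hR : wirtZBar (fun z : Fin n → ℂ =>
        (1/2 : ℂ) * ((∑ k, α k * z k)
          + ∑ k, (starRingEnd ℂ) (α k) * (starRingEnd ℂ) (z k)) + (γ : ℂ)) j z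
        = (1/2 : ℂ) * (starRingEnd ℂ) (α j) := by
      rw [wirtZBar_add ((Sm.dable (contDiff_const.mul (smL1.add smL2))).differentiableAt)
          (differentiableAt_const _), wirtZBar_const,
        wirtZBar_const_mul ((Sm.dable (smL1.add smL2)).differentiableAt),
        wirtZBar_add (smL1.dable.differentiableAt) (smL2.dable.differentiableAt),
        wirtZBar_sum (fun k' _ => (Sm.dable (contDiff_const.mul (sm_coord k'))).differentiableAt),
        wirtZBar_sum (fun k' _ => (Sm.dable (contDiff_const.mul (sm_coord_conj k'))).differentiableAt),
        Finset.sum_congr rfl (fun k' _ => ht1 k'),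
        Finset.sum_congr rfl (fun k' _ => ht2 k'),
        Finset.sum_ite_eq' Finset.univ j (fun k' => (starRingEnd ℂ) (α k'))]
      simp
    rw [hQ, hR]
  intro j k z
  rw [hGj j]
  have dsum : DifferentiableAt ℝ (fun z : Fin n → ℂ => ∑ j', c j' j * z j') z :=
    (Sm.dable (ContDiff.sum fun j' _ => contDiff_const.mul (sm_coord j'))).differentiableAt
  rw [wirtZBar_add dsum (differentiableAt_const _), wirtZBar_const,
    wirtZBar_sum (fun j' _ => (Sm.dable (contDiff_const.mul (sm_coord j'))).differentiableAt),
    Finset.sum_congr rfl (fun j' _ => by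
      rw [wirtZBar_const_mul ((diff_coord j') z), wirtZBar_coord, mul_zero])]
  simp

end S5

namespace S5

variable {n : ℕ} {φ : (Fin n → ℂ) → ℝ}

lemma formula_of_A (hφ : ContDiff ℝ (⊤ : ℕ∞) φ)
    (hA : ∀ j k (z : Fin n → ℂ), wirtZBar (Gf φ j) k z = 0) :
    ∃ c : Matrix (Fin n) (Fin n) ℂ, c.IsHermitian ∧ ∃ α : Fin n → ℂ, ∃ γ : ℝ,
      ∀ z : Fin n → ℂ, Fcf φ z =
        (∑ j, ∑ k, c j k * z j * (starRingEnd ℂ) (z k))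
          + (((∑ k, α k * z k).re : ℝ) : ℂ) + (γ : ℂ) := by
  have hGsm : ∀ k : Fin n, Sm (Gf φ k) := fun k => sm_Gf hφ
  have hmsm : ∀ j k : Fin n, Sm (wirtZ (Gf φ k) j) := fun j k => sm_wirtZ (hGsm k)
  have hGzero : ∀ k l : Fin n, wirtZBar (Gf φ k) l = fun _ : Fin n → ℂ => (0 : ℂ) :=
    fun k l => funext fun z => hA k l z
  have hm1 : ∀ j k l (z : Fin n → ℂ), wirtZBar (wirtZ (Gf φ k) j) l z = 0 := by
    intro j k l z
    rw [wirtZBar_wirtZ_comm (hGsm k), hGzero k l]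
    exact wirtZ_const 0
  have hconjG : ∀ k : Fin n, (fun y => (starRingEnd ℂ) (Gf φ k y)) = wirtZ (Fcf φ) k := by
    intro k; funext y
    have h1 : wirtZ (fun w => (starRingEnd ℂ) (Fcf φ w)) k y
        = (starRingEnd ℂ) (wirtZBar (Fcf φ) k y) :=
      wirtZ_conj ((sm_Fcf hφ).dable.differentiableAt)
    rw [show (fun w => (starRingEnd ℂ) (Fcf φ w)) = Fcf φ from funext Fcf_real] at h1
    exact h1.symm
  have hmconj : ∀ j k (z : Fin n → ℂ),
      (starRingEnd ℂ) (wirtZ (Gf φ k) j z) = wirtZ (Gf φ j) k z := by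
    intro j k z
    rw [← wirtZBar_conj ((hGsm k).dable.differentiableAt), hconjG k,
      wirtZBar_wirtZ_comm (sm_Fcf hφ)]
    rfl
  have hm2 : ∀ j k l (z : Fin n → ℂ), wirtZ (wirtZ (Gf φ k) j) l z = 0 := by
    intro j k l z
    have h1 : (starRingEnd ℂ) (wirtZ (wirtZ (Gf φ k) j) l z) = 0 := by
      rw [← wirtZBar_conj ((hmsm j k).dable.differentiableAt),
        show (fun y => (starRingEnd ℂ) (wirtZ (Gf φ k) j y)) = wirtZ (Gf φ j) k from
          funext fun y => hmconj j k y]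
      exact hm1 k j l z
    have h2 := congrArg (starRingEnd ℂ) h1
    simpa using h2
  have hmconst : ∀ j k (z : Fin n → ℂ), wirtZ (Gf φ k) j z = wirtZ (Gf φ k) j 0 :=
    fun j k z => eq_const_of_wirt (hmsm j k) (fun l y => hm1 j k l y) (fun l y => hm2 j k l y) z
  -- the linear structure of G
  have hGlin : ∀ k (z : Fin n → ℂ),
      Gf φ k z = (∑ j, wirtZ (Gf φ k) j 0 * z j) + Gf φ k 0 := by
    intro k z0
    set L : (Fin n → ℂ) → ℂ := fun z => (∑ j, wirtZ (Gf φ k) j 0 * z j) + Gf φ k 0 with hL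
    have smL : Sm L := (ContDiff.sum fun j _ => contDiff_const.mul (sm_coord j)).add contDiff_const
    have dL : ∀ z : Fin n → ℂ, DifferentiableAt ℝ L z := fun z => smL.dable.differentiableAt
    have dG : ∀ z : Fin n → ℂ, DifferentiableAt ℝ (Gf φ k) z :=
      fun z => (hGsm k).dable.differentiableAt
    have dsumL : ∀ z : Fin n → ℂ,
        DifferentiableAt ℝ (fun z : Fin n → ℂ => ∑ j, wirtZ (Gf φ k) j 0 * z j) z := fun z =>
      (Sm.dable (ContDiff.sum fun j _ => contDiff_const.mul (sm_coord j))).differentiableAt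
    have hLbar : ∀ l (z : Fin n → ℂ), wirtZBar L l z = 0 := by
      intro l z
      rw [hL, wirtZBar_add (dsumL z) (differentiableAt_const _), wirtZBar_const,
        wirtZBar_sum (fun j _ => (Sm.dable (contDiff_const.mul (sm_coord j))).differentiableAt),
        Finset.sum_congr rfl (fun j _ => by
          rw [wirtZBar_const_mul ((diff_coord j) z), wirtZBar_coord, mul_zero])]
      simp
    have hLz : ∀ l (z : Fin n → ℂ), wirtZ L l z = wirtZ (Gf φ k) l 0 := by
      intro l z
      rw [hL, wirtZ_add (dsumL z) (differentiableAt_const _), wirtZ_const,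
        wirtZ_sum (fun j _ => (Sm.dable (contDiff_const.mul (sm_coord j))).differentiableAt),
        Finset.sum_congr rfl (fun j _ => by
          rw [wirtZ_const_mul ((diff_coord j) z), wirtZ_coord])]
      simp only [mul_ite, mul_one, mul_zero]
      rw [Finset.sum_ite_eq' Finset.univ l (fun j => wirtZ (Gf φ k) j 0)]
      simp
    have smD : Sm (fun z => Gf φ k z - L z) := (hGsm k).sub smL
    have hDbar : ∀ l (z : Fin n → ℂ), wirtZBar (fun z => Gf φ k z - L z) l z = 0 := by
      intro l z
      rw [wirtZBar_sub (dG z) (dL z), hA k l z, hLbar l z, sub_self]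
    have hDz : ∀ l (z : Fin n → ℂ), wirtZ (fun z => Gf φ k z - L z) l z = 0 := by
      intro l z
      rw [wirtZ_sub (dG z) (dL z), hLz l z, hmconst l k z, sub_self]
    have h1 : Gf φ k z0 - L z0 = Gf φ k 0 - L 0 := eq_const_of_wirt smD hDbar hDz z0
    have hL0 : L 0 = Gf φ k 0 := by simp [hL]
    rw [hL0, sub_self] at h1
    have h2 := sub_eq_zero.mp h1
    rw [h2, hL]
  -- quadratic and linear comparison functions
  set q : (Fin n → ℂ) → ℂ :=
    fun z => ∑ j, ∑ k, wirtZ (Gf φ k) j 0 * z j * (starRingEnd ℂ) (z k) with hq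
  set lin : (Fin n → ℂ) → ℂ :=
    fun z => ∑ k, ((starRingEnd ℂ) (Gf φ k 0) * z k + Gf φ k 0 * (starRingEnd ℂ) (z k)) with hlin
  have smq : Sm q := ContDiff.sum fun j _ => ContDiff.sum fun k _ =>
    (contDiff_const.mul (sm_coord j)).mul (sm_coord_conj k)
  have smlin : Sm lin := ContDiff.sum fun k _ =>
    (contDiff_const.mul (sm_coord k)).add (contDiff_const.mul (sm_coord_conj k))
  have smR : Sm (fun z => Fcf φ z - q z - lin z) := ((sm_Fcf hφ).sub smq).sub smlin
  have hqbar : ∀ l (z : Fin n → ℂ), wirtZBar q l z = ∑ j, wirtZ (Gf φ l) j 0 * z j := by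
    intro l z
    have hterm : ∀ j' k', wirtZBar
        (fun z : Fin n → ℂ => wirtZ (Gf φ k') j' 0 * z j' * (starRingEnd ℂ) (z k')) l z
        = if k' = l then wirtZ (Gf φ k') j' 0 * z j' else 0 := by
      intro j' k'
      have d1 : DifferentiableAt ℝ (fun z : Fin n → ℂ => wirtZ (Gf φ k') j' 0 * z j') z :=
        (Sm.dable (contDiff_const.mul (sm_coord j'))).differentiableAt
      rw [wirtZBar_mul d1 ((sm_coord_conj k').dable.differentiableAt), wirtZBar_coord_conj,
        wirtZBar_const_mul ((diff_coord j') z), wirtZBar_coord]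
      by_cases h : k' = l <;> simp [h]
    rw [hq, wirtZBar_sum (fun j' _ => (Sm.dable (ContDiff.sum fun k' _ =>
        (contDiff_const.mul (sm_coord j')).mul (sm_coord_conj k'))).differentiableAt),
      Finset.sum_congr rfl (fun j' _ => wirtZBar_sum (fun k' _ =>
        (Sm.dable ((contDiff_const.mul (sm_coord j')).mul (sm_coord_conj k'))).differentiableAt)),
      Finset.sum_congr rfl (fun j' _ => Finset.sum_congr rfl (fun k' _ => hterm j' k')),
      Finset.sum_congr rfl (fun j' _ => Finset.sum_ite_eq' Finset.univ l
        (fun k' => wirtZ (Gf φ k') j' 0 * z j'))]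
    simp
  have hlinbar : ∀ l (z : Fin n → ℂ), wirtZBar lin l z = Gf φ l 0 := by
    intro l z
    have hterm : ∀ k', wirtZBar (fun z : Fin n → ℂ =>
        (starRingEnd ℂ) (Gf φ k' 0) * z k' + Gf φ k' 0 * (starRingEnd ℂ) (z k')) l z
        = if k' = l then Gf φ k' 0 else 0 := by
      intro k'
      rw [wirtZBar_add ((Sm.dable (contDiff_const.mul (sm_coord k'))).differentiableAt)
          ((Sm.dable (contDiff_const.mul (sm_coord_conj k'))).differentiableAt),
        wirtZBar_const_mul ((diff_coord k') z), wirtZBar_coord,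
        wirtZBar_const_mul ((sm_coord_conj k').dable.differentiableAt), wirtZBar_coord_conj]
      by_cases h : k' = l <;> simp [h]
    rw [hlin, wirtZBar_sum (fun k' _ => (Sm.dable ((contDiff_const.mul (sm_coord k')).add
        (contDiff_const.mul (sm_coord_conj k')))).differentiableAt),
      Finset.sum_congr rfl (fun k' _ => hterm k'),
      Finset.sum_ite_eq' Finset.univ l (fun k' => Gf φ k' 0)]
    simp
  have hRbar : ∀ l (z : Fin n → ℂ), wirtZBar (fun z => Fcf φ z - q z - lin z) l z = 0 := by
    intro l z
    have dFq : DifferentiableAt ℝ (fun z : Fin n → ℂ => Fcf φ z - q z) z :=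
      (Sm.dable ((sm_Fcf hφ).sub smq)).differentiableAt
    rw [wirtZBar_sub dFq (smlin.dable.differentiableAt),
      wirtZBar_sub ((sm_Fcf hφ).dable.differentiableAt) (smq.dable.differentiableAt),
      hqbar l z, hlinbar l z]
    have : wirtZBar (Fcf φ) l z = Gf φ l z := rfl
    rw [this, hGlin l z]
    ring
  have hq_real : ∀ z : Fin n → ℂ, (starRingEnd ℂ) (q z) = q z := by
    intro z
    have e : (starRingEnd ℂ) (q z)
        = ∑ j, ∑ k, wirtZ (Gf φ j) k 0 * (starRingEnd ℂ) (z j) * z k := by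
      rw [hq, map_sum]
      apply Finset.sum_congr rfl; intro j _
      rw [map_sum]
      apply Finset.sum_congr rfl; intro k _
      rw [map_mul, map_mul, Complex.conj_conj, hmconj j k 0]
    rw [e, Finset.sum_comm, hq]
    apply Finset.sum_congr rfl; intro j _
    apply Finset.sum_congr rfl; intro k _
    ring
  have hlin_real : ∀ z : Fin n → ℂ, (starRingEnd ℂ) (lin z) = lin z := by
    intro z
    rw [hlin, map_sum]
    apply Finset.sum_congr rfl; intro k _
    rw [map_add, map_mul, map_mul, Complex.conj_conj, Complex.conj_conj]
    ring
  have hR_real : ∀ z : Fin n → ℂ, (starRingEnd ℂ) (Fcf φ z - q z - lin z)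
      = Fcf φ z - q z - lin z := by
    intro z
    rw [map_sub, map_sub, Fcf_real, hq_real, hlin_real]
  have hRz : ∀ l (z : Fin n → ℂ), wirtZ (fun z => Fcf φ z - q z - lin z) l z = 0 := by
    intro l z
    have h1 : wirtZ (fun z => Fcf φ z - q z - lin z) l z
        = wirtZ (fun y => (starRingEnd ℂ) (Fcf φ y - q y - lin y)) l z := by
      rw [show (fun y => (starRingEnd ℂ) (Fcf φ y - q y - lin y))
          = fun y => Fcf φ y - q y - lin y from funext hR_real]
    rw [h1, wirtZ_conj (smR.dable.differentiableAt), hRbar l z, map_zero]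
  have hRconst : ∀ z : Fin n → ℂ, Fcf φ z - q z - lin z = Fcf φ 0 - q 0 - lin 0 :=
    fun z => eq_const_of_wirt smR hRbar hRz z
  have hq0 : q 0 = 0 := by simp [hq]
  have hlin0 : lin 0 = 0 := by simp [hlin]
  have hF0 : Fcf φ 0 = ((φ 0 : ℝ) : ℂ) := by simp [Fcf, Pf, phiC]
  -- final assembly
  refine ⟨Matrix.of (fun j k => wirtZ (Gf φ k) j 0), ?_, fun k => 2 * (starRingEnd ℂ) (Gf φ k 0),
    φ 0, ?_⟩
  · show Matrix.conjTranspose _ = _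
    apply Matrix.ext; intro j k
    rw [Matrix.conjTranspose_apply]
    simp only [Matrix.of_apply]
    exact hmconj k j 0
  · intro z
    have hre : (((∑ k, (2 * (starRingEnd ℂ) (Gf φ k 0)) * z k).re : ℝ) : ℂ) = lin z := by
      rw [re_cast, map_sum]
      simp only [map_mul, Complex.conj_conj, map_ofNat]
      rw [← Finset.sum_add_distrib, hlin, Finset.sum_div]
      apply Finset.sum_congr rfl; intro k _
      ring
    have hconst := hRconst z
    rw [hq0, hlin0, hF0, sub_zero, sub_zero] at hconst
    simp only [Matrix.of_apply]
    rw [show (∑ j, ∑ k, wirtZ (Gf φ k) j 0 * z j * (starRingEnd ℂ) (z k)) = q z from rfl]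
    rw [hre]
    linear_combination hconst
end S5


open S5 in
/-- for smooth `φ : ℂⁿ → ℝ` with `{φ > 0}` nonempty, the
components `(1 + |z|²)(∂φ/∂z̄ⱼ + zⱼ Σ_l z̄_l ∂φ/∂z̄_l)` of the gradient field of
`φ` w.r.t. the Fubini–Study metric are all entire iff
`(1 + |z|²) φ(z) = Σ c_{jk} z_j z̄_k + Re Σ α_k z_k + γ` for a Hermitian matrix
`c`, complex constants `α` and a real constant `γ`. -/
theorem stmt5 (n : ℕ) (hn : 2 ≤ n) (φ : (Fin n → ℂ) → ℝ)
    (hφ : ContDiff ℝ (⊤ : ℕ∞) φ)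
    (hpos : ∃ z : Fin n → ℂ, 0 < φ z) :
    (∀ j : Fin n,
      Differentiable ℂ
        (fun z =>
          ((1 + normSq' z : ℝ) : ℂ) *
            (wirtZBarR φ j z +
              z j * ∑ l, (starRingEnd ℂ) (z l) * wirtZBarR φ l z))) ↔
      ∃ c : Matrix (Fin n) (Fin n) ℂ, c.IsHermitian ∧
        ∃ α : Fin n → ℂ, ∃ γ : ℝ,
          ∀ z : Fin n → ℂ,
            (((1 + normSq' z) * φ z : ℝ) : ℂ) =
              (∑ j, ∑ k, c j k * z j * (starRingEnd ℂ) (z k)) +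
                (((∑ k, α k * z k).re : ℝ) : ℂ) + (γ : ℂ) := by
  have hcast : ∀ z : Fin n → ℂ, (((1 + normSq' z) * φ z : ℝ) : ℂ) = Fcf φ z := by
    intro z
    rw [Complex.ofReal_mul, cast_P]
    rfl
  have hV : ∀ j : Fin n, (fun z => ((1 + normSq' z : ℝ) : ℂ) *
      (wirtZBarR φ j z + z j * ∑ l, (starRingEnd ℂ) (z l) * wirtZBarR φ l z))
      = fun z => Gf φ j z + z j * Hf φ z := V_eq hφ
  simp only [hV]
  rw [key_iff hφ]
  constructor
  · intro hA
    obtain ⟨c, hc, α, γ, hfor⟩ := formula_of_A hφ hA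
    exact ⟨c, hc, α, γ, fun z => by rw [hcast z]; exact hfor z⟩
  · rintro ⟨c, hc, α, γ, hfor⟩
    exact dirA_of_formula hφ c α γ (fun z => by rw [← hcast z]; exact hfor z)
end
end

section
/- Let χ̃ : [0,∞)ⁿ → ℝ be smooth and for z ∈ ℂⁿ set r = (|z_1|²,…,|z_n|²) and H(z)_{jk} = (∂χ̃/∂r_j)(r) δ_{jk} + z̄_j z_k (∂²χ̃/∂r_j∂r_k)(r). Assume H(z) is positive definite (in particular invertible) for every z ∈ ℂⁿ. Let ψ(z) = ψ̃(|z_1|²,…,|z_n|²) be a smooth real-valued multi-radial function, and suppose that for each j ∈ {1,…,n} the function z ↦ Σ_{k=1}^n (H(z)^{-T})_{jk} ∂ψ/∂z̄_k is holomorphic on ℂⁿ, where H^{-T} denotes the transpose of the inverse of H. Then there exist real constants C_0, C_1, …, C_n such that, for every z and every j, Σ_k (H(z)^{-T})_{jk} ∂ψ/∂z̄_k = C_j z_j, and ψ̃(r) = C_0 + Σ_{j=1}^n C_j r_j (∂χ̃/∂r_j)(r). -/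
open Complex MeasureTheory Finset
open scoped ComplexOrder

noncomputable section

/-- Partial derivative `∂f/∂rⱼ` of a function `f : ℝⁿ → ℝ`. -/
def pderiv' {n : ℕ} (f : (Fin n → ℝ) → ℝ) (j : Fin n) (r : Fin n → ℝ) : ℝ :=
  fderiv ℝ f r (Pi.single j 1)

/-- The radii `r = (|z₁|², …, |zₙ|²)`. -/
def rad {n : ℕ} (z : Fin n → ℂ) : Fin n → ℝ := fun i => Complex.normSq (z i)

/-- The Kähler metric `H(z)ⱼₖ = (∂χ̃/∂rⱼ) δⱼₖ + z̄ⱼ zₖ ∂²χ̃/∂rⱼ∂rₖ` induced by a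
multi-radial potential `χ̃`. -/
def radialMetric {n : ℕ} (χ : (Fin n → ℝ) → ℝ) (z : Fin n → ℂ) :
    Matrix (Fin n) (Fin n) ℂ := fun j k =>
  ((pderiv' χ j (rad z) : ℝ) : ℂ) * (if j = k then 1 else 0) +
    (starRingEnd ℂ) (z j) * z k * ((pderiv' (pderiv' χ j) k (rad z) : ℝ) : ℂ)

/-! ### Identity-theorem machinery -/

lemma eq_of_eqOn_circle {f g : ℂ → ℂ} (hf : Differentiable ℂ f) (hg : Differentiable ℂ g)
    (h : ∀ z : ℂ, ‖z‖ = 1 → f z = g z) : f = g := by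
  apply AnalyticOnNhd.eq_of_frequently_eq (analyticOnNhd_univ_iff_differentiable.2 hf)
    (analyticOnNhd_univ_iff_differentiable.2 hg) (z₀ := 1)
  have ht : Filter.Tendsto (fun k : ℕ => Complex.exp ((1/(k+1) : ℝ) * Complex.I)) Filter.atTop
      (nhdsWithin (1:ℂ) {(1:ℂ)}ᶜ) := by
    apply tendsto_nhdsWithin_of_tendsto_nhds_of_eventually_within
    · have h0 : Filter.Tendsto (fun k : ℕ => ((1/(k+1) : ℝ) : ℂ) * Complex.I) Filter.atTop
          (nhds 0) := by
        rw [show (0:ℂ) = ((0:ℝ):ℂ) * Complex.I by simp]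
        exact ((Complex.continuous_ofReal.tendsto 0).comp
          tendsto_one_div_add_atTop_nhds_zero_nat).mul_const _
      simpa [Function.comp_def] using (Complex.continuous_exp.tendsto 0).comp h0
    · filter_upwards with k
      simp only [Set.mem_compl_iff, Set.mem_singleton_iff]
      intro hk
      have h1 : 0 < 1/((k:ℝ)+1) := by positivity
      have h2 : 1/((k:ℝ)+1) ≤ 1 := by
        rw [div_le_one (by positivity)]; linarith [Nat.cast_nonneg (α := ℝ) k]
      have := congrArg Complex.im hk
      rw [Complex.exp_ofReal_mul_I_im] at this
      simp only [Complex.one_im] at this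
      exact absurd this
        (ne_of_gt (Real.sin_pos_of_pos_of_lt_pi h1 (by linarith [Real.pi_gt_three])))
  exact ht.frequently (Filter.Frequently.of_forall fun k => h _ (Complex.norm_exp_ofReal_mul_I _))

lemma eq_of_eqOn_torus {n : ℕ} {f g : (Fin n → ℂ) → ℂ} (hf : Differentiable ℂ f)
    (hg : Differentiable ℂ g)
    (h : ∀ t : Fin n → ℂ, (∀ i, ‖t i‖ = 1) → f t = g t) : f = g := by
  have key : ∀ m : ℕ, ∀ t : Fin n → ℂ,
      (∀ i : Fin n, m ≤ (i : ℕ) → ‖t i‖ = 1) → f t = g t := by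
    intro m
    induction m with
    | zero => exact fun t ht => h t fun i => ht i (Nat.zero_le _)
    | succ m ih =>
      intro t ht
      by_cases hm : m < n
      · set i₀ : Fin n := ⟨m, hm⟩ with hi₀
        have hupd : Differentiable ℂ (fun s : ℂ => Function.update t i₀ s) :=
          fun s => (hasFDerivAt_update t s).differentiableAt
        have hF : Differentiable ℂ (fun s : ℂ => f (Function.update t i₀ s)) :=
          hf.comp hupd
        have hG : Differentiable ℂ (fun s : ℂ => g (Function.update t i₀ s)) :=
          hg.comp hupd
        have heq := eq_of_eqOn_circle hF hG (fun s hs => by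
          apply ih
          intro i hi
          rcases eq_or_ne i i₀ with rfl | hne
          · simpa using hs
          · have hii : (m:ℕ) + 1 ≤ (i:ℕ) := by
              rcases lt_or_eq_of_le hi with h' | h'
              · exact h'
              · exact absurd (Fin.ext h'.symm : i = i₀) hne
            rw [Function.update_of_ne hne]
            exact ht i hii)
        have := congrFun heq (t i₀)
        simpa [Function.update_eq_self] using this
      · exact ih t fun i hi =>
          absurd (lt_of_lt_of_le i.isLt (le_of_not_gt hm)) (not_lt.2 hi)
  exact funext fun t => key n t fun i hi => absurd i.isLt (not_lt.2 hi)

/-! ### Wirtinger derivative of a multi-radial function -/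

def radD {n : ℕ} (z : Fin n → ℂ) : (Fin n → ℂ) →L[ℝ] (Fin n → ℝ) :=
  ContinuousLinearMap.pi (fun i =>
    (2*(z i).re) • (Complex.reCLM.comp (ContinuousLinearMap.proj i) :
        (Fin n → ℂ) →L[ℝ] ℝ) +
    (2*(z i).im) • (Complex.imCLM.comp (ContinuousLinearMap.proj i)))

lemma hasFDerivAt_rad {n : ℕ} (z : Fin n → ℂ) : HasFDerivAt rad (radD z) z := by
  apply hasFDerivAt_pi.2
  intro i
  set e : (Fin n → ℂ) →L[ℝ] ℝ :=
    Complex.reCLM.comp (ContinuousLinearMap.proj i) with he_def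
  set f : (Fin n → ℂ) →L[ℝ] ℝ :=
    Complex.imCLM.comp (ContinuousLinearMap.proj i) with hf_def
  have he : HasFDerivAt (fun w : Fin n → ℂ => (w i).re) e z := e.hasFDerivAt
  have hf : HasFDerivAt (fun w : Fin n → ℂ => (w i).im) f z := f.hasFDerivAt
  have h := (he.mul he).add (hf.mul hf)
  have hfun : (fun w : Fin n → ℂ => Complex.normSq (w i))
      = fun w => (w i).re * (w i).re + (w i).im * (w i).im := by
    funext w; exact Complex.normSq_apply _
  show HasFDerivAt (fun w : Fin n → ℂ => Complex.normSq (w i)) _ z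
  rw [hfun]
  refine HasFDerivAt.congr_fderiv h ?_
  ext v
  simp only [ContinuousLinearMap.add_apply, ContinuousLinearMap.coe_smul',
    Pi.smul_apply, smul_eq_mul, he_def, hf_def]
  ring

lemma radD_single_one {n : ℕ} (z : Fin n → ℂ) (k : Fin n) :
    radD z (Pi.single k 1) = Pi.single k (2*(z k).re) := by
  funext i
  rcases eq_or_ne i k with rfl | hik
  · simp [radD]
  · simp [radD, Pi.single_eq_of_ne hik, Pi.single_eq_of_ne (hik : i ≠ k)]

lemma radD_single_I {n : ℕ} (z : Fin n → ℂ) (k : Fin n) :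
    radD z (Pi.single k Complex.I) = Pi.single k (2*(z k).im) := by
  funext i
  rcases eq_or_ne i k with rfl | hik
  · simp [radD]
  · simp [radD, Pi.single_eq_of_ne hik, Pi.single_eq_of_ne (hik : i ≠ k)]

lemma fderiv_single_smul {n : ℕ} {f : (Fin n → ℝ) → ℝ} {r : Fin n → ℝ}
    (k : Fin n) (c : ℝ) :
    fderiv ℝ f r (Pi.single k c) = c * pderiv' f k r := by
  have : (Pi.single k c : Fin n → ℝ) = c • (Pi.single k 1 : Fin n → ℝ) := by
    funext m
    rcases eq_or_ne m k with rfl | hmk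
    · simp
    · simp [Pi.single_eq_of_ne hmk]
  rw [this, (fderiv ℝ f r).map_smul, pderiv', smul_eq_mul]

lemma wirt_multiradial {n : ℕ} (ψt : (Fin n → ℝ) → ℝ) (hψt : ContDiff ℝ (⊤ : ℕ∞) ψt)
    (ψ : (Fin n → ℂ) → ℝ) (hψ : ∀ z, ψ z = ψt (rad z)) (k : Fin n) (z : Fin n → ℂ) :
    wirtZBarR ψ k z = z k * ((pderiv' ψt k (rad z) : ℝ) : ℂ) := by
  have hψfun : (fun w : Fin n → ℂ => ((ψ w : ℝ) : ℂ))
      = fun w => ((ψt (rad w) : ℝ) : ℂ) := by funext w; rw [hψ]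
  have hd : HasFDerivAt (fun w : Fin n → ℂ => ((ψt (rad w) : ℝ) : ℂ))
      (Complex.ofRealCLM.comp ((fderiv ℝ ψt (rad z)).comp (radD z))) z := by
    exact Complex.ofRealCLM.hasFDerivAt.comp z
      (((hψt.differentiable (by simp)) (rad z)).hasFDerivAt.comp z (hasFDerivAt_rad z))
  rw [wirtZBarR, wirtZBar, hψfun, hd.fderiv]
  simp only [ContinuousLinearMap.coe_comp', Function.comp_apply,
    radD_single_one, radD_single_I, fderiv_single_smul, Complex.ofRealCLM_apply]
  push_cast
  rw [Complex.ext_iff]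
  constructor <;> simp <;> ring

/-! ### Equivariance of the metric under the torus action -/

lemma rad_mul_unit {n : ℕ} {t : Fin n → ℂ} (ht : ∀ i, ‖t i‖ = 1)
    (z : Fin n → ℂ) : rad (fun i => t i * z i) = rad z := by
  funext i
  simp only [rad, Complex.normSq_mul]
  rw [← Complex.sq_norm (t i), ht i]
  ring

lemma conj_mul_self_unit {t : ℂ} (ht : ‖t‖ = 1) :
    (starRingEnd ℂ) t * t = 1 := by
  rw [mul_comm, Complex.mul_conj, ← Complex.sq_norm, ht]
  norm_num

lemma metric_mul_unit {n : ℕ} (χ : (Fin n → ℝ) → ℝ) {t : Fin n → ℂ}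
    (ht : ∀ i, ‖t i‖ = 1) (z : Fin n → ℂ) :
    radialMetric χ (fun i => t i * z i) =
      (Matrix.diagonal t).conjTranspose * radialMetric χ z * Matrix.diagonal t := by
  ext j k
  rw [Matrix.diagonal_conjTranspose, Matrix.mul_diagonal, Matrix.diagonal_mul]
  simp only [radialMetric, Pi.star_apply, map_mul, rad_mul_unit ht z, Complex.star_def]
  rcases eq_or_ne j k with rfl | hjk
  · simp only [if_pos rfl, if_true, eq_self_iff_true, mul_one]
    have h1 := conj_mul_self_unit (ht j)
    linear_combination (-((pderiv' χ j (rad z) : ℝ) : ℂ)) * h1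
  · simp only [if_neg hjk, mul_zero, zero_add]
    ring

lemma metric_inv_mul_unit {n : ℕ} (χ : (Fin n → ℝ) → ℝ)
    (hpos : ∀ z : Fin n → ℂ, (radialMetric χ z).PosDef) {t : Fin n → ℂ}
    (ht : ∀ i, ‖t i‖ = 1) (z : Fin n → ℂ) :
    (radialMetric χ (fun i => t i * z i))⁻¹ =
      Matrix.diagonal (star t) * (radialMetric χ z)⁻¹ * Matrix.diagonal t := by
  have hdet : IsUnit (radialMetric χ z).det :=
    (Matrix.isUnit_iff_isUnit_det _).1 (hpos z).isUnit
  apply Matrix.inv_eq_left_inv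
  rw [metric_mul_unit χ ht z, Matrix.diagonal_conjTranspose]
  have h1 : (Matrix.diagonal t : Matrix (Fin n) (Fin n) ℂ) * Matrix.diagonal (star t) = 1 := by
    rw [Matrix.diagonal_mul_diagonal]
    rw [show (fun i => t i * star t i) = fun _ => (1:ℂ) from funext fun i => by
      rw [Pi.star_apply, mul_comm, Complex.star_def]; exact conj_mul_self_unit (ht i)]
    exact Matrix.diagonal_one
  have h2 : (Matrix.diagonal (star t) : Matrix (Fin n) (Fin n) ℂ) * Matrix.diagonal t = 1 := by
    rw [Matrix.diagonal_mul_diagonal]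
    rw [show (fun i => star t i * t i) = fun _ => (1:ℂ) from funext fun i => by
      rw [Pi.star_apply, Complex.star_def]; exact conj_mul_self_unit (ht i)]
    exact Matrix.diagonal_one
  simp only [Matrix.mul_assoc]
  rw [show (Matrix.diagonal t : Matrix (Fin n) (Fin n) ℂ) *
      (Matrix.diagonal (star t) * (radialMetric χ z * Matrix.diagonal t))
      = radialMetric χ z * Matrix.diagonal t from by
    rw [← Matrix.mul_assoc, h1, Matrix.one_mul]]
  rw [show (radialMetric χ z)⁻¹ * (radialMetric χ z * Matrix.diagonal t)
      = Matrix.diagonal t from by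
    rw [← Matrix.mul_assoc, Matrix.nonsing_inv_mul _ hdet, Matrix.one_mul]]
  exact h2

lemma contDiff_pderiv' {n : ℕ} {f : (Fin n → ℝ) → ℝ} (hf : ContDiff ℝ (⊤ : ℕ∞) f)
    (j : Fin n) : ContDiff ℝ (⊤ : ℕ∞) (pderiv' f j) := by
  have h1 : ContDiff ℝ (⊤ : ℕ∞) (fderiv ℝ f) :=
    hf.fderiv_right (m := (⊤ : ℕ∞)) (by exact_mod_cast le_top)
  exact h1.clm_apply contDiff_const

lemma pi_decomp {n : ℕ} (v : Fin n → ℝ) :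
    ∑ k, (v k) • (Pi.single k (1:ℝ) : Fin n → ℝ) = v := by
  have h : ∀ k, (v k) • (Pi.single k (1:ℝ) : Fin n → ℝ) = Pi.single k (v k) := by
    intro k
    funext m
    rcases eq_or_ne m k with rfl | hmk
    · simp
    · simp [Pi.single_eq_of_ne hmk]
  rw [Finset.sum_congr rfl fun k _ => h k, Finset.univ_sum_single]

/-- for a smooth multi-radial Kähler potential `χ̃` with positive
definite metric `H(z)` and a smooth multi-radial weight `ψ(z) = ψ̃(|z₁|²,…,|zₙ|²)`
whose gradient field `(∂̄ψ)^♯` is holomorphic, the gradient field is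
`Σ Cⱼ zⱼ ∂/∂zⱼ` for real constants `Cⱼ` and `ψ̃ = C₀ + Σ Cⱼ rⱼ ∂χ̃/∂rⱼ`. -/
theorem stmt6 (n : ℕ) (χ : (Fin n → ℝ) → ℝ) (hχ : ContDiff ℝ (⊤ : ℕ∞) χ)
    (hpos : ∀ z : Fin n → ℂ, (radialMetric χ z).PosDef)
    (ψt : (Fin n → ℝ) → ℝ) (hψt : ContDiff ℝ (⊤ : ℕ∞) ψt)
    (ψ : (Fin n → ℂ) → ℝ) (hψ : ∀ z, ψ z = ψt (rad z))
    (hhol : ∀ j : Fin n,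
      Differentiable ℂ
        (fun z => ∑ k, ((radialMetric χ z)⁻¹).transpose j k * wirtZBarR ψ k z)) :
    ∃ C₀ : ℝ, ∃ C : Fin n → ℝ,
      (∀ z : Fin n → ℂ, ∀ j : Fin n,
        (∑ k, ((radialMetric χ z)⁻¹).transpose j k * wirtZBarR ψ k z) =
          ((C j : ℝ) : ℂ) * z j) ∧
      (∀ r : Fin n → ℝ, (∀ i, 0 ≤ r i) →
        ψt r = C₀ + ∑ j, C j * r j * pderiv' χ j r) := by
  classical
  have hdet : ∀ z : Fin n → ℂ, IsUnit (radialMetric χ z).det := fun z =>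
    (Matrix.isUnit_iff_isUnit_det _).1 (hpos z).isUnit
  set g : Fin n → (Fin n → ℂ) → ℂ := fun j z =>
    ∑ k, ((radialMetric χ z)⁻¹).transpose j k * wirtZBarR ψ k z with hg_def
  -- equivariance
  have hequiv : ∀ (t z : Fin n → ℂ), (∀ i, ‖t i‖ = 1) → ∀ j,
      g j (fun i => t i * z i) = t j * g j z := by
    intro t z ht j
    simp only [hg_def]
    rw [Finset.mul_sum]
    apply Finset.sum_congr rfl
    intro k _
    rw [metric_inv_mul_unit χ hpos ht z]
    rw [wirt_multiradial ψt hψt ψ hψ k (fun i => t i * z i),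
      wirt_multiradial ψt hψt ψ hψ k z, rad_mul_unit ht z]
    rw [Matrix.transpose_apply, Matrix.transpose_apply, Matrix.mul_diagonal,
      Matrix.diagonal_mul]
    have hk := conj_mul_self_unit (ht k)
    rw [Pi.star_apply, Complex.star_def]
    linear_combination (t j * (radialMetric χ z)⁻¹ k j * z k *
      ((pderiv' ψt k (rad z) : ℝ) : ℂ)) * hk
  -- holomorphic equivariant functions are multiples of the coordinate
  have hgc : ∀ j : Fin n, ∀ z : Fin n → ℂ, g j z = g j (fun _ => 1) * z j := by
    intro j
    have hdiff2 : Differentiable ℂ (fun z : Fin n → ℂ => g j (fun _ => 1) * z j) :=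
      (differentiable_const _).mul
        ((ContinuousLinearMap.proj j : (Fin n → ℂ) →L[ℂ] ℂ).differentiable)
    have heq := eq_of_eqOn_torus (hhol j) hdiff2 (fun t ht => by
      have h1 := hequiv t (fun _ => 1) ht j
      simp only [mul_one] at h1
      show g j t = _
      rw [h1]
      ring)
    exact fun z => congrFun heq z
  set c : Fin n → ℂ := fun j => g j (fun _ => 1) with hc_def
  -- the main PDE: Hᵀ ∘ gradient = ∂̄ψ
  have hmain : ∀ (z : Fin n → ℂ) (k : Fin n),
      ∑ j, radialMetric χ z j k * (c j * z j) = wirtZBarR ψ k z := by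
    intro z k
    have hexp : ∀ j, radialMetric χ z j k * (c j * z j)
        = ∑ m, radialMetric χ z j k * ((radialMetric χ z)⁻¹ m j * wirtZBarR ψ m z) := by
      intro j
      rw [← Finset.mul_sum, ← hgc j z]
      simp only [hg_def]
      congr 1
    rw [Finset.sum_congr rfl fun j _ => hexp j, Finset.sum_comm]
    have h2 : ∀ m, ∑ j, radialMetric χ z j k * ((radialMetric χ z)⁻¹ m j * wirtZBarR ψ m z)
        = ((radialMetric χ z)⁻¹ * radialMetric χ z) m k * wirtZBarR ψ m z := by
      intro m
      rw [Matrix.mul_apply, Finset.sum_mul]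
      exact Finset.sum_congr rfl fun j _ => by ring
    rw [Finset.sum_congr rfl fun m _ => h2 m, Matrix.nonsing_inv_mul _ (hdet z)]
    simp [Matrix.one_apply]
  -- realness of the constants
  have hreal : ∀ j, c j = ((c j).re : ℂ) := by
    have h1 : ∀ k, ∑ j, radialMetric χ (fun _ => (1:ℂ)) j k * c j
        = ((pderiv' ψt k (rad (fun _ : Fin n => (1:ℂ))) : ℝ) : ℂ) := by
      intro k
      have hm := hmain (fun _ => (1:ℂ)) k
      rw [wirt_multiradial ψt hψt ψ hψ k (fun _ => (1:ℂ))] at hm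
      simpa using hm
    have hconjM : ∀ j k, (starRingEnd ℂ) (radialMetric χ (fun _ : Fin n => (1:ℂ)) j k)
        = radialMetric χ (fun _ : Fin n => (1:ℂ)) j k := by
      intro j k
      simp only [radialMetric, map_add, map_mul, Complex.conj_ofReal, map_one,
        Complex.conj_conj, apply_ite (starRingEnd ℂ), map_zero]
    have h2 : ∀ k, ∑ j, radialMetric χ (fun _ => (1:ℂ)) j k * ((starRingEnd ℂ) (c j))
        = ((pderiv' ψt k (rad (fun _ : Fin n => (1:ℂ))) : ℝ) : ℂ) := by
      intro k
      have hcj := congrArg (starRingEnd ℂ) (h1 k)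
      rw [map_sum] at hcj
      simp only [map_mul, hconjM, Complex.conj_ofReal] at hcj
      exact hcj
    set w : Fin n → ℂ := fun j => (starRingEnd ℂ) (c j) - c j with hw_def
    have hw : ∀ k, ∑ j, radialMetric χ (fun _ : Fin n => (1:ℂ)) j k * w j = 0 := by
      intro k
      have := sub_eq_zero.2 ((h2 k).trans (h1 k).symm)
      rw [← Finset.sum_sub_distrib] at this
      rw [← this]
      exact Finset.sum_congr rfl fun j _ => by simp only [hw_def]; ring
    have hmw : (radialMetric χ (fun _ : Fin n => (1:ℂ))).transpose.mulVec w = 0 := by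
      funext k
      have := hw k
      simp only [Matrix.mulVec, dotProduct, Matrix.transpose_apply]
      simpa using this
    have hdetT : IsUnit (radialMetric χ (fun _ : Fin n => (1:ℂ))).transpose.det := by
      rw [Matrix.det_transpose]; exact hdet _
    have hwz : w = 0 := by
      calc w = (((radialMetric χ (fun _ : Fin n => (1:ℂ))).transpose)⁻¹
            * (radialMetric χ (fun _ : Fin n => (1:ℂ))).transpose).mulVec w := by
            rw [Matrix.nonsing_inv_mul _ hdetT, Matrix.one_mulVec]
        _ = ((radialMetric χ (fun _ : Fin n => (1:ℂ))).transpose)⁻¹.mulVec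
            ((radialMetric χ (fun _ : Fin n => (1:ℂ))).transpose.mulVec w) := by
            rw [Matrix.mulVec_mulVec]
        _ = 0 := by rw [hmw, Matrix.mulVec_zero]
    intro j
    have := congrFun hwz j
    simp only [hw_def, Pi.zero_apply, sub_eq_zero] at this
    exact (Complex.conj_eq_iff_re.1 this).symm
  refine ⟨ψt 0, fun j => (c j).re, ?_, ?_⟩
  · intro z j
    show g j z = _
    rw [hgc j z]
    show c j * z j = _
    rw [hreal j]
  · -- the potential equation
    have hL12 : ∀ r : Fin n → ℝ, (∀ i, 0 ≤ r i) → ∀ k,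
        pderiv' ψt k r = (c k).re * pderiv' χ k r
          + ∑ j, (c j).re * r j * pderiv' (pderiv' χ j) k r := by
      have hposcase : ∀ r : Fin n → ℝ, (∀ i, 0 ≤ r i) → ∀ k, 0 < r k →
          pderiv' ψt k r = (c k).re * pderiv' χ k r
            + ∑ j, (c j).re * r j * pderiv' (pderiv' χ j) k r := by
        intro r hr k hrk
        set z : Fin n → ℂ := fun i => ((Real.sqrt (r i) : ℝ) : ℂ) with hz_def
        have hradz : rad z = r := funext fun i => by
          simp only [rad, hz_def, Complex.normSq_ofReal]
          exact Real.mul_self_sqrt (hr i)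
        have hss : ∀ i, ((Real.sqrt (r i) : ℝ) : ℂ) * ((Real.sqrt (r i) : ℝ) : ℂ)
            = ((r i : ℝ) : ℂ) := fun i => by
          rw [← Complex.ofReal_mul, Real.mul_self_sqrt (hr i)]
        have hm := hmain z k
        rw [wirt_multiradial ψt hψt ψ hψ k z, hradz] at hm
        have hexp : ∀ j, radialMetric χ z j k * (c j * z j)
            = (if j = k then ((Real.sqrt (r k) : ℝ) : ℂ)
                * (((c k).re * pderiv' χ k r : ℝ) : ℂ) else 0)
              + ((Real.sqrt (r k) : ℝ) : ℂ)
                * (((c j).re * r j * pderiv' (pderiv' χ j) k r : ℝ) : ℂ) := by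
          intro j
          rw [hreal j]
          simp only [Complex.ofReal_re]
          simp only [radialMetric, hradz]
          simp only [hz_def, Complex.conj_ofReal]
          rcases eq_or_ne j k with rfl | hjk
          · rw [if_pos rfl, if_pos rfl]
            push_cast
            linear_combination (((c j).re : ℂ) * ((pderiv' (pderiv' χ j) j r : ℝ) : ℂ)
              * ((Real.sqrt (r j) : ℝ) : ℂ)) * hss j
          · rw [if_neg hjk, if_neg hjk]
            push_cast
            linear_combination (((c j).re : ℂ) * ((pderiv' (pderiv' χ j) k r : ℝ) : ℂ)
              * ((Real.sqrt (r k) : ℝ) : ℂ)) * hss j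
        rw [Finset.sum_congr rfl fun j _ => hexp j, Finset.sum_add_distrib] at hm
        rw [Finset.sum_ite_eq' Finset.univ k] at hm
        simp only [Finset.mem_univ, if_true] at hm
        have hfac : ((Real.sqrt (r k) : ℝ) : ℂ)
            * ((((c k).re * pderiv' χ k r)
                + ∑ j, (c j).re * r j * pderiv' (pderiv' χ j) k r : ℝ) : ℂ)
            = ((Real.sqrt (r k) : ℝ) : ℂ) * ((pderiv' ψt k r : ℝ) : ℂ) := by
          rw [← hm]
          push_cast
          rw [mul_add, Finset.mul_sum]
        have hne : ((Real.sqrt (r k) : ℝ) : ℂ) ≠ 0 := by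
          rw [Complex.ofReal_ne_zero]
          exact (Real.sqrt_pos.2 hrk).ne'
        have hcan := mul_left_cancel₀ hne hfac
        exact_mod_cast hcan.symm
      intro r hr k
      have hc1 : Continuous (pderiv' ψt k) :=
        (contDiff_pderiv' hψt k).continuous
      have hc2 : Continuous (fun x : Fin n → ℝ => (c k).re * pderiv' χ k x
          + ∑ j, (c j).re * x j * pderiv' (pderiv' χ j) k x) := by
        apply Continuous.add
        · exact continuous_const.mul (contDiff_pderiv' hχ k).continuous
        · apply continuous_finset_sum
          intro j _
          exact (continuous_const.mul (continuous_apply j)).mul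
            (contDiff_pderiv' (contDiff_pderiv' hχ j) k).continuous
      have heqon : Set.EqOn (pderiv' ψt k)
          (fun x : Fin n → ℝ => (c k).re * pderiv' χ k x
            + ∑ j, (c j).re * x j * pderiv' (pderiv' χ j) k x)
          {x : Fin n → ℝ | (∀ i, 0 ≤ x i) ∧ 0 < x k} := by
        intro x hx
        exact hposcase x hx.1 k hx.2
      have hclos : r ∈ closure {x : Fin n → ℝ | (∀ i, 0 ≤ x i) ∧ 0 < x k} := by
        apply mem_closure_of_tendsto
          (f := fun m : ℕ => r + (1/(m+1) : ℝ) • (Pi.single k 1 : Fin n → ℝ))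
          (b := Filter.atTop)
        · have h0 : Filter.Tendsto (fun m : ℕ => (1/(m+1) : ℝ)) Filter.atTop (nhds 0) :=
            tendsto_one_div_add_atTop_nhds_zero_nat
          have := (h0.smul_const (Pi.single k 1 : Fin n → ℝ)).const_add r
          simpa using this
        · apply Filter.Eventually.of_forall
          intro m
          have hm1 : 0 < (1/(m+1) : ℝ) := by positivity
          constructor
          · intro i
            rcases eq_or_ne i k with rfl | hik
            · simp only [Pi.add_apply, Pi.smul_apply, Pi.single_eq_same, smul_eq_mul, mul_one]
              linarith [hr i]
            · simp only [Pi.add_apply, Pi.smul_apply, Pi.single_eq_of_ne hik, smul_eq_mul,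
                mul_zero, add_zero]
              exact hr i
          · simp only [Pi.add_apply, Pi.smul_apply, Pi.single_eq_same, smul_eq_mul, mul_one]
            linarith [hr k]
      exact heqon.closure hc1 hc2 hclos
    -- now integrate along rays
    intro r hr
    set F : (Fin n → ℝ) → ℝ :=
      fun y => ψt y - ∑ j, (c j).re * (y j * pderiv' χ j y) with hF_def
    set DF : (Fin n → ℝ) → ((Fin n → ℝ) →L[ℝ] ℝ) := fun x =>
      fderiv ℝ ψt x - ∑ j, (c j).re • (x j • fderiv ℝ (pderiv' χ j) x
        + pderiv' χ j x • (ContinuousLinearMap.proj j : (Fin n → ℝ) →L[ℝ] ℝ)) with hDF_def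
    have hFat : ∀ x, HasFDerivAt F (DF x) x := by
      intro x
      apply HasFDerivAt.sub
      · exact ((hψt.differentiable (by simp)) x).hasFDerivAt
      · apply HasFDerivAt.fun_sum
        intro j _
        have hproj : HasFDerivAt (fun y : Fin n → ℝ => y j)
            (ContinuousLinearMap.proj j : (Fin n → ℝ) →L[ℝ] ℝ) x :=
          hasFDerivAt_apply j x
        have hpd : HasFDerivAt (pderiv' χ j) (fderiv ℝ (pderiv' χ j) x) x :=
          (((contDiff_pderiv' hχ j).differentiable (by simp)) x).hasFDerivAt
        exact (hproj.mul hpd).const_mul ((c j).re)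
    have hbasis : ∀ x : Fin n → ℝ, (∀ i, 0 ≤ x i) → ∀ k, DF x (Pi.single k 1) = 0 := by
      intro x hx k
      have h12 := hL12 x hx k
      simp only [hDF_def, ContinuousLinearMap.coe_sub', Pi.sub_apply,
        ContinuousLinearMap.coe_sum', Finset.sum_apply, ContinuousLinearMap.coe_smul',
        Pi.smul_apply, ContinuousLinearMap.add_apply, ContinuousLinearMap.proj_apply,
        smul_eq_mul]
      have hterm : ∀ j, (c j).re * (x j * (fderiv ℝ (pderiv' χ j) x) (Pi.single k 1)
          + pderiv' χ j x * (Pi.single k (1:ℝ) : Fin n → ℝ) j)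
          = (c j).re * x j * pderiv' (pderiv' χ j) k x
            + (if j = k then (c k).re * pderiv' χ k x else 0) := by
        intro j
        rcases eq_or_ne j k with rfl | hjk
        · rw [if_pos rfl, Pi.single_eq_same]
          show _ * (_ * pderiv' (pderiv' χ j) j x + _ * 1) = _
          ring
        · rw [if_neg hjk, Pi.single_eq_of_ne hjk]
          show _ * (_ * pderiv' (pderiv' χ j) k x + _ * 0) = _
          ring
      rw [Finset.sum_congr rfl fun j _ => hterm j, Finset.sum_add_distrib,
        Finset.sum_ite_eq' Finset.univ k]
      simp only [Finset.mem_univ, if_true]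
      show pderiv' ψt k x - _ = 0
      rw [h12]
      ring
    have hDFzero : ∀ x : Fin n → ℝ, (∀ i, 0 ≤ x i) → ∀ v, DF x v = 0 := by
      intro x hx v
      have hv : v = ∑ k, (v k) • (Pi.single k (1:ℝ) : Fin n → ℝ) := (pi_decomp v).symm
      rw [hv, map_sum]
      rw [Finset.sum_congr rfl fun k _ => by
        rw [(DF x).map_smul, hbasis x hx k, smul_zero]]
      exact Finset.sum_const_zero
    set φ : ℝ → ℝ := fun s => F (s • r) with hφ_def
    have hφ : ∀ s : ℝ, HasDerivAt φ (DF (s • r) r) s := by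
      intro s
      apply HasFDerivAt.comp_hasDerivAt (f := fun s : ℝ => s • r) s (hFat (s • r))
      simpa using (hasDerivAt_id s).smul_const r
    have hconst := constant_of_derivWithin_zero (f := φ) (a := (0:ℝ)) (b := 1)
      (fun s _ => ((hφ s).differentiableAt.differentiableWithinAt))
      (fun x hx => by
        have hx0 : ∀ i, 0 ≤ (x • r) i := by
          intro i
          simp only [Pi.smul_apply, smul_eq_mul]
          exact mul_nonneg hx.1 (hr i)
        have h0 := hφ x
        rw [hDFzero (x • r) hx0 r] at h0
        exact h0.hasDerivWithinAt.derivWithin ((uniqueDiffOn_Icc one_pos) x (Set.Ico_subset_Icc_self hx)))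
      1 (Set.mem_Icc.2 ⟨zero_le_one, le_refl 1⟩)
    have hφ1 : φ 1 = φ 0 := hconst
    have hF0 : F 0 = ψt 0 := by
      simp only [hF_def, Pi.zero_apply, zero_mul, mul_zero, Finset.sum_const_zero, sub_zero]
    have hFr : F r = ψt 0 := by
      have h1 : φ 1 = F r := by rw [hφ_def]; simp
      have h0 : φ 0 = F 0 := by rw [hφ_def]; simp
      rw [← h1, hφ1, h0, hF0]
    have hsum_eq : ∑ j, (c j).re * (r j * pderiv' χ j r)
        = ∑ j, (c j).re * r j * pderiv' χ j r :=
      Finset.sum_congr rfl fun j _ => by ring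
    simp only [hF_def] at hFr
    rw [hsum_eq] at hFr
    linarith [hFr]
end
end

section
/- Let F_1,…,F_n : [0,∞) → ℝ be smooth functions with F_j'(r) + r F_j''(r) > 0 for all r ≥ 0 and all j, and let ψ(z) = ψ̃(|z_1|²,…,|z_n|²) be a smooth real-valued multi-radial function on ℂⁿ. Then for each j ∈ {1,…,n} the function z ↦ (∂ψ/∂z̄_j)(z) / (F_j'(|z_j|²) + |z_j|² F_j''(|z_j|²)) is holomorphic on ℂⁿ if and only if there exist real constants C_0, C_1, …, C_n such that ψ(z) = C_0 + Σ_{j=1}^n C_j |z_j|² F_j'(|z_j|²). In that case the gradient field equals Σ_j C_j z_j ∂/∂z_j, i.e. the displayed function equals C_j z_j for every j. -/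
open Complex MeasureTheory Finset

noncomputable section

/-- The `j`-th component of the gradient field `(∂̄ψ)^♯` with respect to the
decoupled metric `hⱼₖ = δⱼₖ (Fⱼ' + rⱼ Fⱼ'')`, `rⱼ = |zⱼ|²`. -/
def decoupledGrad {n : ℕ} (F : Fin n → ℝ → ℝ) (ψ : (Fin n → ℂ) → ℝ)
    (j : Fin n) (z : Fin n → ℂ) : ℂ :=
  wirtZBarR ψ j z /
    (((deriv (F j) (Complex.normSq (z j)) +
        Complex.normSq (z j) * deriv (deriv (F j)) (Complex.normSq (z j)) : ℝ)) : ℂ)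

namespace Stmt7Aux

/-- derivative of normSq -/
lemma normSq_hasFDerivAt (z : ℂ) :
    HasFDerivAt Complex.normSq
      ((2 * z.re) • Complex.reCLM + (2 * z.im) • Complex.imCLM : ℂ →L[ℝ] ℝ) z := by
  have h : (Complex.normSq : ℂ → ℝ) = fun w => w.re * w.re + w.im * w.im := by
    funext w; exact Complex.normSq_apply w
  rw [h]
  have hre : HasFDerivAt (fun w : ℂ => w.re) (Complex.reCLM : ℂ →L[ℝ] ℝ) z :=
    Complex.reCLM.hasFDerivAt
  have him : HasFDerivAt (fun w : ℂ => w.im) (Complex.imCLM : ℂ →L[ℝ] ℝ) z :=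
    Complex.imCLM.hasFDerivAt
  have := (hre.mul hre).add (him.mul him)
  refine this.congr_fderiv ?_
  ext w <;> (simp [two_mul] <;> ring)

variable {n : ℕ}

def Phi (z : Fin n → ℂ) : Fin n → ℝ := fun i => Complex.normSq (z i)

def PhiD (z : Fin n → ℂ) : (Fin n → ℂ) →L[ℝ] (Fin n → ℝ) :=
  ContinuousLinearMap.pi fun i =>
    (((2 * (z i).re) • Complex.reCLM + (2 * (z i).im) • Complex.imCLM : ℂ →L[ℝ] ℝ)).comp
      (ContinuousLinearMap.proj i)

lemma Phi_hasFDerivAt (z : Fin n → ℂ) : HasFDerivAt Phi (PhiD z) z := by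
  apply hasFDerivAt_pi'.2
  intro i
  have h := (normSq_hasFDerivAt (z i)).comp z
    ((ContinuousLinearMap.proj i : (Fin n → ℂ) →L[ℝ] ℂ)).hasFDerivAt
  convert h using 1
  · rfl
  · exact ContinuousLinearMap.ext fun v => rfl

lemma PhiD_single_one (z : Fin n → ℂ) (j : Fin n) :
    PhiD z (Pi.single j 1) = Pi.single j (2 * (z j).re) := by
  funext i
  by_cases h : i = j
  · subst h; simp [PhiD]
  · simp [PhiD, Pi.single_apply, h]

lemma PhiD_single_I (z : Fin n → ℂ) (j : Fin n) :
    PhiD z (Pi.single j Complex.I) = Pi.single j (2 * (z j).im) := by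
  funext i
  by_cases h : i = j
  · subst h; simp [PhiD]
  · simp [PhiD, Pi.single_apply, h]

lemma single_eq_smul (j : Fin n) (c : ℝ) :
    (Pi.single j c : Fin n → ℝ) = c • (Pi.single j 1 : Fin n → ℝ) := by
  funext i; by_cases h : i = j <;> simp [Pi.single_apply, h]

/-- Lemma A: Wirtinger z̄ⱼ-derivative of a multiradial function. -/
lemma wirt_comp (ψt : (Fin n → ℝ) → ℝ) (j : Fin n) (z : Fin n → ℂ)
    (hψt : DifferentiableAt ℝ ψt (Phi z)) :
    wirtZBarR (fun w => ψt (Phi w)) j z =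
      ((fderiv ℝ ψt (Phi z) (Pi.single j 1) : ℝ) : ℂ) * z j := by
  have H : HasFDerivAt (fun w => ((ψt (Phi w) : ℝ) : ℂ))
      ((Complex.ofRealCLM.comp (fderiv ℝ ψt (Phi z))).comp (PhiD z)) z :=
    (Complex.ofRealCLM.hasFDerivAt.comp _ hψt.hasFDerivAt).comp z (Phi_hasFDerivAt z)
  rw [wirtZBarR, wirtZBar, H.fderiv]
  set a := fderiv ℝ ψt (Phi z) (Pi.single j 1) with ha
  have h1 : fderiv ℝ ψt (Phi z) (PhiD z (Pi.single j 1)) = 2 * (z j).re * a := by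
    rw [PhiD_single_one, single_eq_smul, _root_.map_smul]; simp [smul_eq_mul, ha]
  have h2 : fderiv ℝ ψt (Phi z) (PhiD z (Pi.single j Complex.I)) = 2 * (z j).im * a := by
    rw [PhiD_single_I, single_eq_smul, _root_.map_smul]; simp [smul_eq_mul, ha]
  simp only [ContinuousLinearMap.comp_apply, h1, h2, Complex.ofRealCLM_apply]
  rw [Complex.ext_iff]
  constructor <;> simp <;> ring


/-- derivative of `s ↦ C * (s * F'(s))`. -/
lemma hasDerivAt_sF' (F : ℝ → ℝ) (hF : ContDiff ℝ (⊤ : ℕ∞) F) (c s : ℝ) :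
    HasDerivAt (fun t => c * (t * deriv F t))
      (c * (deriv F s + s * deriv (deriv F) s)) s := by
  have hd1 : ContDiff ℝ (⊤ : ℕ∞) (deriv F) := (contDiff_infty_iff_deriv.mp hF).2
  have hd : HasDerivAt (deriv F) (deriv (deriv F) s) s :=
    ((contDiff_infty_iff_deriv.mp hd1).1 s).hasDerivAt
  have h := ((hasDerivAt_id s).mul hd).const_mul c
  refine h.congr_deriv ?_
  simp only [id]
  ring

/-- derivative of the model potential. -/
lemma psit'_hasFDerivAt (F : Fin n → ℝ → ℝ) (hF : ∀ j, ContDiff ℝ (⊤ : ℕ∞) (F j))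
    (C₀ : ℝ) (C : Fin n → ℝ) (r : Fin n → ℝ) :
    HasFDerivAt (fun r : Fin n → ℝ => C₀ + ∑ k, C k * r k * deriv (F k) (r k))
      (∑ k, (C k * (deriv (F k) (r k) + r k * deriv (deriv (F k)) (r k))) •
        (ContinuousLinearMap.proj k : (Fin n → ℝ) →L[ℝ] ℝ)) r := by
  have hterm : ∀ k : Fin n, HasFDerivAt (fun r : Fin n → ℝ => C k * r k * deriv (F k) (r k))
      ((C k * (deriv (F k) (r k) + r k * deriv (deriv (F k)) (r k))) •
        (ContinuousLinearMap.proj k : (Fin n → ℝ) →L[ℝ] ℝ)) r := by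
    intro k
    have h := (hasDerivAt_sF' (F k) (hF k) (C k) (r k)).comp_hasFDerivAt r
      ((ContinuousLinearMap.proj k : (Fin n → ℝ) →L[ℝ] ℝ)).hasFDerivAt
    refine h.congr_of_eventuallyEq (Filter.Eventually.of_forall fun x => ?_)
    all_goals simp only [Function.comp_apply, ContinuousLinearMap.proj_apply]
    all_goals ring
  have hsum := HasFDerivAt.fun_sum (u := Finset.univ) (fun k _ => hterm k)
  have h2 := (hasFDerivAt_const C₀ r).add hsum
  rw [zero_add] at h2
  exact h2

lemma sum_smul_proj_single (c : Fin n → ℝ) (j : Fin n) :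
    (∑ k, (c k) • (ContinuousLinearMap.proj k : (Fin n → ℝ) →L[ℝ] ℝ))
      (Pi.single j (1:ℝ)) = c j := by
  simp [ContinuousLinearMap.sum_apply, Pi.single_apply]


lemma grad_of_formula (F : Fin n → ℝ → ℝ) (hF : ∀ j, ContDiff ℝ (⊤ : ℕ∞) (F j))
    (hFpos : ∀ j, ∀ r : ℝ, 0 ≤ r → 0 < deriv (F j) r + r * deriv (deriv (F j)) r)
    (C₀ : ℝ) (C : Fin n → ℝ) (ψ : (Fin n → ℂ) → ℝ)
    (hψC : ∀ z : Fin n → ℂ, ψ z = C₀ + ∑ k, C k * Complex.normSq (z k) *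
      deriv (F k) (Complex.normSq (z k)))
    (j : Fin n) (z : Fin n → ℂ) :
    decoupledGrad F ψ j z = ((C j : ℝ) : ℂ) * z j := by
  set ψt' : (Fin n → ℝ) → ℝ := fun r => C₀ + ∑ k, C k * r k * deriv (F k) (r k) with hψt'
  have hψeq : ψ = fun w => ψt' (Phi w) := by
    funext w; rw [hψC w]; simp only [hψt', Phi]
  have hD := psit'_hasFDerivAt F hF C₀ C (Phi z)
  have hdiff : DifferentiableAt ℝ ψt' (Phi z) := hD.differentiableAt
  have hw : wirtZBarR ψ j z = ((fderiv ℝ ψt' (Phi z) (Pi.single j 1) : ℝ) : ℂ) * z j := by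
    rw [hψeq]; exact wirt_comp ψt' j z hdiff
  have hev : fderiv ℝ ψt' (Phi z) (Pi.single j 1)
      = C j * (deriv (F j) (Phi z j) + Phi z j * deriv (deriv (F j)) (Phi z j)) := by
    rw [hD.fderiv]; exact sum_smul_proj_single _ j
  set D : ℝ := deriv (F j) (Complex.normSq (z j)) +
    Complex.normSq (z j) * deriv (deriv (F j)) (Complex.normSq (z j)) with hDdef
  have hDpos : 0 < D := hFpos j _ (Complex.normSq_nonneg _)
  have hD0 : (D : ℂ) ≠ 0 := by exact_mod_cast hDpos.ne'
  have hPhij : Phi z j = Complex.normSq (z j) := rfl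
  rw [decoupledGrad, hw, hev, hPhij, ← hDdef]
  have hcast : ((C j * D : ℝ) : ℂ) = (C j : ℂ) * (D : ℂ) := by push_cast; ring
  rw [hcast]
  field_simp


/-- A holomorphic function with real values has vanishing real Fréchet derivative. -/
lemma fderiv_eq_zero_of_im_eq_zero {E : Type*} [NormedAddCommGroup E] [NormedSpace ℂ E]
    (f : E → ℂ) {s : Set E} (hs : IsOpen s) (hf : ∀ x ∈ s, DifferentiableAt ℂ f x)
    (him : ∀ x ∈ s, (f x).im = 0) {x : E} (hx : x ∈ s) :
    fderiv ℝ f x = 0 := by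
  have hfx := hf x hx
  set L : E →L[ℂ] ℂ := fderiv ℂ f x with hL
  have hres : fderiv ℝ f x = L.restrictScalars ℝ := hfx.fderiv_restrictScalars ℝ
  have him0 : ∀ v : E, (L v).im = 0 := by
    intro v
    -- derivative of t ↦ f (x + t • v) at 0
    have hline : HasDerivAt (fun t : ℝ => x + t • v) v 0 := by
      have h1 : HasDerivAt (fun t : ℝ => t • v) ((1:ℝ) • v) 0 :=
        (hasDerivAt_id (0:ℝ)).smul_const v
      simpa using h1.const_add x
    have hfd : HasFDerivAt f (L.restrictScalars ℝ) (x + (0:ℝ) • v) := by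
      simpa using (hfx.hasFDerivAt.restrictScalars ℝ)
    have hg : HasDerivAt (fun t : ℝ => f (x + t • v)) (L v) 0 := by
      have := hfd.comp_hasDerivAt 0 hline
      exact this
    have hgim : HasDerivAt (fun t : ℝ => (f (x + t • v)).im) (L v).im 0 :=
      (Complex.imCLM.hasFDerivAt.comp_hasDerivAt 0 hg)
    have heq : (fun t : ℝ => (f (x + t • v)).im) =ᶠ[nhds 0] (fun _ => 0) := by
      have hcont : Continuous (fun t : ℝ => x + t • v) := by continuity
      have hmem : (fun t : ℝ => x + t • v) ⁻¹' s ∈ nhds (0:ℝ) := by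
        apply (hs.preimage hcont).mem_nhds
        simpa using hx
      filter_upwards [hmem] with t ht
      exact him _ ht
    have hzero : HasDerivAt (fun _ : ℝ => (0:ℝ)) (L v).im 0 := hgim.congr_of_eventuallyEq heq.symm
    have := hzero.unique (hasDerivAt_const 0 0)
    exact this
  have hL0 : ∀ v : E, L v = 0 := by
    intro v
    have h1 := him0 v
    have h2 := him0 (Complex.I • v)
    rw [L.map_smul] at h2
    rw [Complex.ext_iff]
    constructor
    · have h3 : (Complex.I * L v).im = 0 := by simpa [smul_eq_mul] using h2
      simpa using h3
    · simpa using h1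
  have : L = 0 := ContinuousLinearMap.ext fun v => hL0 v
  rw [hres, this]
  rfl


lemma clm_ext_single {L L' : (Fin n → ℝ) →L[ℝ] ℝ}
    (h : ∀ j, L (Pi.single j 1) = L' (Pi.single j 1)) : L = L' := by
  ext v
  have hv : v = ∑ j, Pi.single j (v j) := (Finset.univ_sum_single v).symm
  rw [hv, map_sum, map_sum]
  refine Finset.sum_congr rfl fun j _ => ?_
  rw [single_eq_smul, _root_.map_smul, _root_.map_smul, h j]

def Wj : Set (Fin n → ℂ) := {z | ∀ i, 0 < (z i).re}

lemma convex_Wj : Convex ℝ (Wj (n := n)) := by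
  have : (Wj (n := n)) = ⋂ i, (fun z : Fin n → ℂ => z i) ⁻¹' {w : ℂ | 0 < w.re} := by
    ext z; simp [Wj]
  rw [this]
  refine convex_iInter fun i => ?_
  exact (convex_halfSpace_re_gt 0).is_linear_preimage
    ⟨fun a b => rfl, fun c a => rfl⟩

lemma isOpen_Wj : IsOpen (Wj (n := n)) := by
  have : (Wj (n := n)) = ⋂ i, (fun z : Fin n → ℂ => (z i).re) ⁻¹' Set.Ioi 0 := by
    ext z; simp [Wj]
  rw [this]
  exact isOpen_iInter_of_finite fun i =>
    isOpen_Ioi.preimage (Complex.continuous_re.comp (continuous_apply i))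

def Om : Set (Fin n → ℝ) := {r | ∀ i, 0 < r i}

lemma convex_Om : Convex ℝ (Om (n := n)) := by
  have : (Om (n := n)) = ⋂ i, (fun r : Fin n → ℝ => r i) ⁻¹' Set.Ioi 0 := by
    ext r; simp [Om]
  rw [this]
  exact convex_iInter fun i => (convex_Ioi 0).is_linear_preimage ⟨fun a b => rfl, fun c a => rfl⟩

lemma isOpen_Om : IsOpen (Om (n := n)) := by
  have : (Om (n := n)) = ⋂ i, (fun r : Fin n → ℝ => r i) ⁻¹' Set.Ioi 0 := by
    ext r; simp [Om]
  rw [this]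
  exact isOpen_iInter_of_finite fun i => isOpen_Ioi.preimage (continuous_apply i)


lemma forward_main (F : Fin n → ℝ → ℝ) (hF : ∀ j, ContDiff ℝ (⊤ : ℕ∞) (F j))
    (hFpos : ∀ j, ∀ r : ℝ, 0 ≤ r → 0 < deriv (F j) r + r * deriv (deriv (F j)) r)
    (ψt : (Fin n → ℝ) → ℝ) (hψt : ContDiff ℝ (⊤ : ℕ∞) ψt)
    (ψ : (Fin n → ℂ) → ℝ)
    (hψ : ∀ z : Fin n → ℂ, ψ z = ψt (fun i => Complex.normSq (z i)))
    (hhol : ∀ j : Fin n, Differentiable ℂ (decoupledGrad F ψ j)) :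
    ∃ C₀ : ℝ, ∃ C : Fin n → ℝ, ∀ z : Fin n → ℂ,
      ψ z = C₀ + ∑ j, C j * Complex.normSq (z j) * deriv (F j) (Complex.normSq (z j)) := by
  classical
  have hψeq : ψ = fun w => ψt (Phi w) := funext fun w => hψ w
  set Dfun : Fin n → ℝ → ℝ :=
    fun j s => deriv (F j) s + s * deriv (deriv (F j)) s with hDfun
  set B : Fin n → (Fin n → ℂ) → ℝ :=
    fun j z => fderiv ℝ ψt (Phi z) (Pi.single j 1) with hB
  set q : Fin n → (Fin n → ℂ) → ℝ :=
    fun j z => B j z / Dfun j (Complex.normSq (z j)) with hqdef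
  have hDpos : ∀ (j : Fin n) (s : ℝ), 0 ≤ s → 0 < Dfun j s := fun j s hs => hFpos j s hs
  have hgrad : ∀ (j : Fin n) (z : Fin n → ℂ),
      decoupledGrad F ψ j z = ((q j z : ℝ) : ℂ) * z j := by
    intro j z
    have hw : wirtZBarR ψ j z = ((B j z : ℝ) : ℂ) * z j := by
      rw [hψeq]
      exact wirt_comp ψt j z ((hψt.differentiable (by simp)) (Phi z))
    have hD0 : (Dfun j (Complex.normSq (z j)) : ℂ) ≠ 0 := by
      exact_mod_cast (hDpos j _ (Complex.normSq_nonneg _)).ne'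
    rw [decoupledGrad, hw]
    have hden : deriv (F j) (Complex.normSq (z j)) +
        Complex.normSq (z j) * deriv (deriv (F j)) (Complex.normSq (z j))
        = Dfun j (Complex.normSq (z j)) := rfl
    rw [hden]
    simp only [hqdef]
    rw [Complex.ofReal_div]
    field_simp
  -- constancy of q j on Wj
  have h1W : (fun _ => (1:ℂ)) ∈ (Wj (n := n)) := by intro i; simp [Wj]
  have hconst : ∀ (j : Fin n), ∀ z ∈ (Wj (n := n)), q j z = q j (fun _ => 1) := by
    intro j z hz
    set f : (Fin n → ℂ) → ℂ := fun w => ((q j w : ℝ) : ℂ) with hf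
    have hfW : ∀ w ∈ (Wj (n := n)), f w = decoupledGrad F ψ j w / w j := by
      intro w hw
      have hwj : w j ≠ 0 := by
        intro h0
        have := hw j
        rw [h0] at this
        simp at this
      rw [hf, hgrad j w]
      field_simp
    have hdiffAt : ∀ x ∈ (Wj (n := n)), DifferentiableAt ℂ f x := by
      intro x hx
      have hxj : x j ≠ 0 := by
        intro h0
        have := hx j
        rw [h0] at this
        simp at this
      have hproj : DifferentiableAt ℂ (fun w : Fin n → ℂ => w j) x :=
        (ContinuousLinearMap.proj j : (Fin n → ℂ) →L[ℂ] ℂ).differentiableAt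
      have h1 : DifferentiableAt ℂ (fun w : Fin n → ℂ => decoupledGrad F ψ j w / w j) x := by
        simp only [div_eq_mul_inv]
        exact (hhol j x).mul (hproj.inv hxj)
      refine h1.congr_of_eventuallyEq ?_
      filter_upwards [isOpen_Wj.mem_nhds hx] with w hw
      exact hfW w hw
    have him : ∀ x ∈ (Wj (n := n)), (f x).im = 0 := fun x _ => by simp [hf]
    have hfconst : f z = f (fun _ => 1) := by
      refine convex_Wj.is_const_of_fderivWithin_eq_zero (𝕜 := ℝ)
        (fun x hx => ((hdiffAt x hx).restrictScalars ℝ).differentiableWithinAt)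
        (fun x hx => ?_) hz h1W
      rw [fderivWithin_of_isOpen isOpen_Wj hx]
      exact fderiv_eq_zero_of_im_eq_zero f isOpen_Wj hdiffAt him hx
    simp only [hf] at hfconst
    exact_mod_cast hfconst
  set Cj : Fin n → ℝ := fun j => q j (fun _ => 1) with hCj
  -- partial derivatives of ψt on the open orthant
  have hpartial : ∀ r ∈ (Om (n := n)), ∀ j : Fin n,
      fderiv ℝ ψt r (Pi.single j 1) = Cj j * Dfun j (r j) := by
    intro r hr j
    set zr : Fin n → ℂ := fun i => ((Real.sqrt (r i) : ℝ) : ℂ) with hzr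
    have hzrW : zr ∈ (Wj (n := n)) := by
      intro i
      simp only [hzr, Complex.ofReal_re]
      exact Real.sqrt_pos.2 (hr i)
    have hPhi : Phi zr = r := by
      funext i
      simp only [Phi, hzr, Complex.normSq_ofReal]
      exact Real.mul_self_sqrt (hr i).le
    have hq : q j zr = Cj j := hconst j zr hzrW
    have hD0 : Dfun j (r j) ≠ 0 := (hDpos j _ (hr j).le).ne'
    have hnz : Complex.normSq (zr j) = r j := congrFun hPhi j
    simp only [hqdef, hB] at hq
    rw [hPhi, hnz] at hq
    rw [div_eq_iff hD0] at hq
    linarith [hq]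
  -- the function φ is constant on the orthant
  set model : (Fin n → ℝ) → ℝ :=
    fun r => (0:ℝ) + ∑ k, Cj k * r k * deriv (F k) (r k) with hmodel
  have hmodelD : ∀ r : Fin n → ℝ, HasFDerivAt model
      (∑ k, (Cj k * (deriv (F k) (r k) + r k * deriv (deriv (F k)) (r k))) •
        (ContinuousLinearMap.proj k : (Fin n → ℝ) →L[ℝ] ℝ)) r :=
    fun r => psit'_hasFDerivAt F hF 0 Cj r
  have hφD : ∀ r ∈ (Om (n := n)), HasFDerivAt (fun r => ψt r - model r) (0 : (Fin n → ℝ) →L[ℝ] ℝ) r := by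
    intro r hr
    have hψtD : HasFDerivAt ψt
        (∑ k, (Cj k * (deriv (F k) (r k) + r k * deriv (deriv (F k)) (r k))) •
          (ContinuousLinearMap.proj k : (Fin n → ℝ) →L[ℝ] ℝ)) r := by
      have hEq : fderiv ℝ ψt r =
          ∑ k, (Cj k * (deriv (F k) (r k) + r k * deriv (deriv (F k)) (r k))) •
            (ContinuousLinearMap.proj k : (Fin n → ℝ) →L[ℝ] ℝ) := by
        apply clm_ext_single
        intro j
        rw [hpartial r hr j, sum_smul_proj_single]
      rw [← hEq]
      exact ((hψt.differentiable (by simp)) r).hasFDerivAt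
    have h := hψtD.sub (hmodelD r); rw [sub_self] at h; exact h
  have h1O : (fun _ => (1:ℝ)) ∈ (Om (n := n)) := fun i => one_pos
  set C₀ : ℝ := ψt (fun _ => 1) - model (fun _ => 1) with hC₀
  have hOm : ∀ r ∈ (Om (n := n)), ψt r = C₀ + model r := by
    intro r hr
    have := convex_Om.is_const_of_fderivWithin_eq_zero (𝕜 := ℝ)
      (f := fun r => ψt r - model r)
      (fun x hx => (hφD x hx).differentiableAt.differentiableWithinAt)
      (fun x hx => by rw [fderivWithin_of_isOpen isOpen_Om hx]; exact (hφD x hx).fderiv)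
      hr h1O
    have h' : ψt r - model r = ψt (fun _ => 1) - model (fun _ => 1) := this
    rw [hC₀]
    linarith [h']
  refine ⟨C₀, Cj, fun z => ?_⟩
  -- extend to the closed orthant by continuity
  have hcd : ∀ k : Fin n, Continuous (deriv (F k)) :=
    fun k => ((contDiff_infty_iff_deriv.mp (hF k)).2).continuous
  set g : ℝ → ℝ := fun ε =>
    ψt (fun i => Complex.normSq (z i) + ε) -
      (C₀ + ∑ k, Cj k * (Complex.normSq (z k) + ε) *
        deriv (F k) (Complex.normSq (z k) + ε)) with hg
  have hgcont : Continuous g := by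
    apply Continuous.sub
    · exact (hψt.continuous).comp
        (continuous_pi fun i => continuous_const.add continuous_id)
    · refine continuous_const.add (continuous_finset_sum _ fun k _ => ?_)
      have h1 : Continuous fun ε : ℝ => Complex.normSq (z k) + ε :=
        continuous_const.add continuous_id
      exact (continuous_const.mul h1).mul ((hcd k).comp h1)
  have hg0 : ∀ ε ∈ Set.Ioi (0:ℝ), g ε = 0 := by
    intro ε hε
    have hrO : (fun i => Complex.normSq (z i) + ε) ∈ (Om (n := n)) := by
      intro i
      have := Complex.normSq_nonneg (z i)
      have : (0:ℝ) < Complex.normSq (z i) + ε := by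
        have := Set.mem_Ioi.mp hε
        positivity
      exact this
    have := hOm _ hrO
    simp only [hg, hmodel] at *
    linarith [this]
  have hgz : g 0 = 0 := by
    have h1 : Filter.Tendsto g (nhdsWithin 0 (Set.Ioi 0)) (nhds (g 0)) :=
      (hgcont.tendsto 0).mono_left nhdsWithin_le_nhds
    have h2 : Filter.Tendsto g (nhdsWithin 0 (Set.Ioi 0)) (nhds 0) := by
      refine Filter.Tendsto.congr' ?_ tendsto_const_nhds
      filter_upwards [self_mem_nhdsWithin] with ε hε
      exact (hg0 ε hε).symm
    exact tendsto_nhds_unique h1 h2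
  rw [hψ z]
  simp only [hg, add_zero] at hgz
  linarith [hgz]

end Stmt7Aux

/-- for the Kähler metric on `ℂⁿ` with decoupled multi-radial
potential `Σ Fⱼ(|zⱼ|²)` and a smooth multi-radial weight `ψ`, the gradient
field `(∂̄ψ)^♯` is holomorphic iff `ψ(z) = C₀ + Σ Cⱼ |zⱼ|² Fⱼ'(|zⱼ|²)`;
and in that case `(∂̄ψ)^♯ = Σ Cⱼ zⱼ ∂/∂zⱼ`. -/
theorem stmt7 (n : ℕ) (F : Fin n → ℝ → ℝ)
    (hF : ∀ j, ContDiff ℝ (⊤ : ℕ∞) (F j))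
    (hFpos : ∀ j, ∀ r : ℝ, 0 ≤ r → 0 < deriv (F j) r + r * deriv (deriv (F j)) r)
    (ψt : (Fin n → ℝ) → ℝ) (hψt : ContDiff ℝ (⊤ : ℕ∞) ψt)
    (ψ : (Fin n → ℂ) → ℝ)
    (hψ : ∀ z : Fin n → ℂ, ψ z = ψt (fun i => Complex.normSq (z i))) :
    ((∀ j : Fin n, Differentiable ℂ (decoupledGrad F ψ j)) ↔
      ∃ C₀ : ℝ, ∃ C : Fin n → ℝ,
        ∀ z : Fin n → ℂ,
          ψ z = C₀ + ∑ j, C j * Complex.normSq (z j) *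
            deriv (F j) (Complex.normSq (z j))) ∧
    (∀ C₀ : ℝ, ∀ C : Fin n → ℝ,
      (∀ z : Fin n → ℂ,
        ψ z = C₀ + ∑ j, C j * Complex.normSq (z j) *
          deriv (F j) (Complex.normSq (z j))) →
      ∀ j : Fin n, ∀ z : Fin n → ℂ,
        decoupledGrad F ψ j z = ((C j : ℝ) : ℂ) * z j) := by

  constructor
  · constructor
    · intro hhol
      exact Stmt7Aux.forward_main F hF hFpos ψt hψt ψ hψ hhol
    · rintro ⟨C₀, C, hC⟩ j
      have hfun : decoupledGrad F ψ j = fun z => ((C j : ℝ) : ℂ) * z j :=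
        funext fun z => Stmt7Aux.grad_of_formula F hF hFpos C₀ C ψ hC j z
      rw [hfun]
      exact ((ContinuousLinearMap.proj j : (Fin n → ℂ) →L[ℂ] ℂ).differentiable).const_mul _
  · intro C₀ C hC j z
    exact Stmt7Aux.grad_of_formula F hF hFpos C₀ C ψ hC j z
end
end

section
/- Let G_1,…,G_n : [0,∞) → ℝ be smooth functions such that the matrix H(z)_{jk} = (∂χ̃/∂r_j)(r) δ_{jk} + z̄_j z_k (∂²χ̃/∂r_j∂r_k)(r), where χ̃(r_1,…,r_n) = Π_{j=1}^n G_j(r_j) and r = (|z_1|²,…,|z_n|²), is positive definite for all z ∈ ℂⁿ. Let ψ(z) = ψ̃(|z_1|²,…,|z_n|²) be a smooth real-valued multi-radial function. Then for each j the function z ↦ Σ_k (H(z)^{-T})_{jk} ∂ψ/∂z̄_k is holomorphic on ℂⁿ if and only if there exist real constants C_0, C_1, …, C_n with ψ(z) = C_0 + Σ_{j=1}^n C_j |z_j|² G_j'(|z_j|²) Π_{k ≠ j} G_k(|z_k|²); in that case Σ_k (H(z)^{-T})_{jk} ∂ψ/∂z̄_k = C_j z_j for every j. -/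
open Complex MeasureTheory Finset
open scoped ComplexOrder

noncomputable section

/-! ### Auxiliary lemmas -/

lemma contDiff_normSq' : ContDiff ℝ (⊤ : ℕ∞) Complex.normSq := by
  have h : (Complex.normSq : ℂ → ℝ) = fun z => z.re * z.re + z.im * z.im :=
    funext Complex.normSq_apply
  rw [h]
  exact (Complex.reCLM.contDiff.mul Complex.reCLM.contDiff).add
    (Complex.imCLM.contDiff.mul Complex.imCLM.contDiff)

lemma contDiff_rad {n : ℕ} : ContDiff ℝ (⊤ : ℕ∞) (rad (n := n)) := by
  apply contDiff_pi.2
  intro i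
  exact contDiff_normSq'.comp (ContinuousLinearMap.proj (R := ℝ) (φ := fun _ : Fin n => ℂ) i).contDiff

lemma hasDerivAt_comp_update {n : ℕ} {f : (Fin n → ℝ) → ℝ} {r : Fin n → ℝ}
    (hf : DifferentiableAt ℝ f r) (j : Fin n) :
    HasDerivAt (fun s => f (Function.update r j s)) (pderiv' f j r) (r j) := by
  have hg := hasDerivAt_update r j (r j)
  have hfd : HasFDerivAt f (fderiv ℝ f r) (Function.update r j (r j)) := by
    rw [Function.update_eq_self]; exact hf.hasFDerivAt
  exact hfd.comp_hasDerivAt (r j) hg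

lemma pderiv'_eq_deriv_update {n : ℕ} {f : (Fin n → ℝ) → ℝ} {r : Fin n → ℝ}
    (hf : DifferentiableAt ℝ f r) (j : Fin n) :
    pderiv' f j r = deriv (fun t => f (Function.update r j t)) (r j) :=
  (hasDerivAt_comp_update hf j).deriv.symm

lemma hasDerivAt_normSq_line (a v : ℂ) :
    HasDerivAt (fun s : ℝ => Complex.normSq (a + s • v))
      (2 * (a.re * v.re + a.im * v.im)) 0 := by
  have h : (fun s : ℝ => Complex.normSq (a + s • v)) =
      fun s : ℝ => (a.re + s * v.re) * (a.re + s * v.re) + (a.im + s * v.im) * (a.im + s * v.im) := by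
    funext s
    simp [Complex.normSq_apply, Complex.add_re, Complex.add_im, Complex.smul_re, Complex.smul_im]
  rw [h]
  have h1 : HasDerivAt (fun s : ℝ => a.re + s * v.re) v.re 0 :=
    (hasDerivAt_mul_const v.re).const_add a.re
  have h2 : HasDerivAt (fun s : ℝ => a.im + s * v.im) v.im 0 :=
    (hasDerivAt_mul_const v.im).const_add a.im
  have := (h1.fun_mul h1).fun_add (h2.fun_mul h2)
  exact this.congr_deriv (by simp; ring)

lemma fderiv_comp_rad {n : ℕ} {f : (Fin n → ℝ) → ℝ} (hf : ContDiff ℝ (⊤ : ℕ∞) f)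
    (z : Fin n → ℂ) (k : Fin n) (v : ℂ) :
    fderiv ℝ (fun w => f (rad w)) z (Pi.single k v)
      = 2 * ((z k).re * v.re + (z k).im * v.im) * pderiv' f k (rad z) := by
  classical
  have hg : DifferentiableAt ℝ (fun w => f (rad w)) z :=
    (hf.differentiable (by simp)).differentiableAt.comp z
      ((contDiff_rad.differentiable (by simp)) z)
  set u : Fin n → ℂ := Pi.single k v with hu
  have hline : HasDerivAt (fun s : ℝ => z + s • u) u 0 := by
    simpa using ((hasDerivAt_id (0:ℝ)).smul_const u).const_add z
  have hcomp : HasDerivAt (fun s : ℝ => f (rad (z + s • u)))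
      (fderiv ℝ (fun w => f (rad w)) z u) 0 := by
    have h0 : z + (0:ℝ) • u = z := by simp
    have := HasFDerivAt.comp_hasDerivAt 0 (by rw [h0]; exact hg.hasFDerivAt) hline
    simpa [Function.comp_def] using this
  have hq : HasDerivAt (fun s : ℝ => Complex.normSq (z k + s • v))
      (2 * ((z k).re * v.re + (z k).im * v.im)) 0 := hasDerivAt_normSq_line (z k) v
  have hrw : (fun s : ℝ => f (rad (z + s • u))) =
      fun s : ℝ => f (Function.update (rad z) k (Complex.normSq (z k + s • v))) := by
    funext s
    congr 1
    funext i
    by_cases hi : i = k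
    · subst hi; simp [rad, hu, Function.update_self]
    · simp [rad, Function.update_of_ne hi, hu, Pi.single_eq_of_ne hi]
  have hupd : HasDerivAt (fun t : ℝ => f (Function.update (rad z) k t))
      (pderiv' f k (rad z)) (rad z k) :=
    hasDerivAt_comp_update ((hf.differentiable (by simp)).differentiableAt) k
  have hupd' : HasDerivAt (fun t : ℝ => f (Function.update (rad z) k t))
      (pderiv' f k (rad z)) (Complex.normSq (z k + (0:ℝ) • v)) := by
    simpa [rad] using hupd
  have hcomp2 : HasDerivAt (fun s : ℝ => f (Function.update (rad z) k (Complex.normSq (z k + s • v))))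
      (pderiv' f k (rad z) * (2 * ((z k).re * v.re + (z k).im * v.im))) 0 := by
    have := HasDerivAt.comp 0 hupd' hq
    simpa [Function.comp_def] using this
  rw [hrw] at hcomp
  have := hcomp.unique hcomp2
  rw [this]; ring

lemma wirtZBarR_comp_rad {n : ℕ} {f : (Fin n → ℝ) → ℝ} (hf : ContDiff ℝ (⊤ : ℕ∞) f)
    (k : Fin n) (z : Fin n → ℂ) :
    wirtZBarR (fun w => f (rad w)) k z = z k * ((pderiv' f k (rad z) : ℝ) : ℂ) := by
  have hg : DifferentiableAt ℝ (fun w => f (rad w)) z :=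
    ((hf.differentiable (by simp)).differentiableAt).comp z
      ((contDiff_rad.differentiable (by simp)) z)
  have hco : ∀ v : ℂ, fderiv ℝ (fun w => ((f (rad w) : ℝ) : ℂ)) z (Pi.single k v)
      = ((fderiv ℝ (fun w => f (rad w)) z (Pi.single k v) : ℝ) : ℂ) := by
    intro v
    have h1 : HasFDerivAt (fun w => ((f (rad w) : ℝ) : ℂ))
        (Complex.ofRealCLM.comp (fderiv ℝ (fun w => f (rad w)) z)) z :=
      Complex.ofRealCLM.hasFDerivAt.comp z hg.hasFDerivAt
    rw [h1.fderiv]; rfl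
  unfold wirtZBarR wirtZBar
  rw [hco 1, hco Complex.I, fderiv_comp_rad hf z k 1, fderiv_comp_rad hf z k Complex.I]
  simp only [Complex.one_re, Complex.one_im, Complex.I_re, Complex.I_im]
  push_cast
  rw [show (z k) = (z k).re + (z k).im * Complex.I from (Complex.re_add_im (z k)).symm]
  simp only [Complex.add_re, Complex.add_im, Complex.mul_re, Complex.mul_im,
    Complex.ofReal_re, Complex.ofReal_im, Complex.I_re, Complex.I_im]
  push_cast
  ring

lemma wirtZBarR_const_add {n : ℕ} (c : ℝ) (g : (Fin n → ℂ) → ℝ) (k : Fin n) (z : Fin n → ℂ) :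
    wirtZBarR (fun w => c + g w) k z = wirtZBarR g k z := by
  unfold wirtZBarR wirtZBar
  have h : (fun w => ((c + g w : ℝ) : ℂ)) = fun w => (c : ℂ) + ((g w : ℝ) : ℂ) := by
    funext w; push_cast; ring
  rw [h, fderiv_const_add]

lemma contDiff_chi {n : ℕ} {G : Fin n → ℝ → ℝ} (hG : ∀ j, ContDiff ℝ (⊤ : ℕ∞) (G j)) :
    ContDiff ℝ (⊤ : ℕ∞) (fun r : Fin n → ℝ => ∏ j, G j (r j)) := by
  classical
  induction (Finset.univ : Finset (Fin n)) using Finset.induction_on with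
  | empty => simpa using contDiff_const
  | insert _ _ hj ih =>
      simp only [Finset.prod_insert hj]
      exact (((hG _).comp (ContinuousLinearMap.proj (R := ℝ) (φ := fun _ : Fin n => ℝ) _).contDiff)).mul ih

lemma pderiv'_chi {n : ℕ} {G : Fin n → ℝ → ℝ} (hG : ∀ j, ContDiff ℝ (⊤ : ℕ∞) (G j))
    (j : Fin n) (r : Fin n → ℝ) :
    pderiv' (fun r : Fin n → ℝ => ∏ k, G k (r k)) j r
      = deriv (G j) (r j) * ∏ k ∈ Finset.univ.erase j, G k (r k) := by
  classical
  have hdiff : DifferentiableAt ℝ (fun r : Fin n → ℝ => ∏ k, G k (r k)) r :=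
    ((contDiff_chi hG).differentiable (by simp)).differentiableAt
  rw [pderiv'_eq_deriv_update hdiff j]
  have hrw : (fun t : ℝ => ∏ k, G k (Function.update r j t k))
      = fun t : ℝ => G j t * ∏ k ∈ Finset.univ.erase j, G k (r k) := by
    funext t
    rw [← Finset.mul_prod_erase Finset.univ _ (Finset.mem_univ j)]
    congr 1
    · simp
    · exact Finset.prod_congr rfl fun k hk =>
        congrArg (G k) (Function.update_of_ne (Finset.ne_of_mem_erase hk) _ _)
  rw [hrw]
  exact (((hG j).differentiable (by simp) (r j)).hasDerivAt.mul_const _).deriv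

lemma pderiv'_Phi {n : ℕ} {χ : (Fin n → ℝ) → ℝ} (hχ : ContDiff ℝ (⊤ : ℕ∞) χ) (C : Fin n → ℝ)
    (k : Fin n) (r : Fin n → ℝ) :
    pderiv' (fun r => ∑ j, C j * (r j * pderiv' χ j r)) k r
      = ∑ j, C j * ((if j = k then 1 else 0) * pderiv' χ j r
          + r j * pderiv' (pderiv' χ j) k r) := by
  classical
  have hterm : ∀ j : Fin n, ContDiff ℝ (⊤ : ℕ∞) (fun r : Fin n → ℝ => C j * (r j * pderiv' χ j r)) :=
    fun j => contDiff_const.mul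
      (((ContinuousLinearMap.proj (R := ℝ) (φ := fun _ : Fin n => ℝ) j).contDiff).mul
        (contDiff_pderiv' hχ j))
  have hPhi : ContDiff ℝ (⊤ : ℕ∞) (fun r : Fin n → ℝ => ∑ j, C j * (r j * pderiv' χ j r)) :=
    ContDiff.sum fun j _ => hterm j
  rw [pderiv'_eq_deriv_update (hPhi.differentiable (by simp)).differentiableAt k]
  have hder : HasDerivAt (fun t : ℝ => ∑ j, C j * (Function.update r k t j * pderiv' χ j (Function.update r k t)))
      (∑ j, C j * ((if j = k then 1 else 0) * pderiv' χ j r + r j * pderiv' (pderiv' χ j) k r)) (r k) := by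
    apply HasDerivAt.fun_sum
    intro j _
    have hu : HasDerivAt (fun t : ℝ => Function.update r k t j) (if j = k then 1 else 0) (r k) := by
      by_cases h : j = k
      · subst h; simp only [if_pos rfl]
        simpa using (hasDerivAt_id' (r j)).congr_deriv rfl
      · simp only [if_neg h]
        have : (fun t : ℝ => Function.update r k t j) = fun _ => r j := by
          funext t; exact Function.update_of_ne h _ _
        rw [this]; exact hasDerivAt_const _ _
    have hv : HasDerivAt (fun t : ℝ => pderiv' χ j (Function.update r k t))
        (pderiv' (pderiv' χ j) k r) (r k) :=
      hasDerivAt_comp_update (((contDiff_pderiv' hχ j).differentiable (by simp)).differentiableAt) k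
    have := (hu.mul hv).const_mul (C j)
    simpa using this
  exact hder.deriv

lemma eq_zero_of_circle_zero {g : ℂ → ℂ} (hg : Differentiable ℂ g)
    (h0 : ∀ θ : ℝ, g (Complex.exp (θ * Complex.I)) = 0) (w : ℂ) : g w = 0 := by
  have han : AnalyticOnNhd ℂ g Set.univ := fun x _ => hg.analyticAt x
  have hfreq : ∃ᶠ x in nhdsWithin (1 : ℂ) {(1:ℂ)}ᶜ, g x = 0 := by
    have hseq : Filter.Tendsto (fun m : ℕ => Complex.exp ((1 / (m + 1) : ℝ) * Complex.I))
        Filter.atTop (nhdsWithin (1 : ℂ) {(1:ℂ)}ᶜ) := by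
      apply tendsto_nhdsWithin_of_tendsto_nhds_of_eventually_within
      · have h3 : Filter.Tendsto (fun m : ℕ => ((1 / (m + 1) : ℝ) : ℂ) * Complex.I)
            Filter.atTop (nhds 0) := by
          have h1 : Filter.Tendsto (fun m : ℕ => (1 / (m + 1) : ℝ)) Filter.atTop (nhds 0) :=
            tendsto_one_div_add_atTop_nhds_zero_nat
          have h2 := (Complex.ofRealCLM.continuous.tendsto 0).comp h1
          simpa using h2.mul_const Complex.I
        have := (Complex.continuous_exp.tendsto 0).comp h3
        simpa [Function.comp_def] using this
      · apply Filter.Eventually.of_forall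
        intro m
        simp only [Set.mem_compl_iff, Set.mem_singleton_iff]
        intro hcon
        rw [Complex.exp_eq_one_iff] at hcon
        obtain ⟨q, hq⟩ := hcon
        have hq2 : ((1 / (m + 1) : ℝ) : ℂ) = (q : ℂ) * (2 * Real.pi) := by
          apply mul_right_cancel₀ Complex.I_ne_zero
          rw [hq]; ring
        have hq3 : (1 / (m + 1) : ℝ) = q * (2 * Real.pi) := by
          exact_mod_cast hq2
        have hpos : (0:ℝ) < 1 / (m + 1) := by positivity
        have hle : (1 / (m + 1) : ℝ) ≤ 1 := by
          rw [div_le_one (by positivity)]; linarith [Nat.cast_nonneg (α := ℝ) m]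
        have hq0 : (0:ℝ) < q := by
          by_contra hq0
          push_neg at hq0
          have : (q : ℝ) * (2 * Real.pi) ≤ 0 :=
            mul_nonpos_of_nonpos_of_nonneg (by exact_mod_cast hq0) (by positivity)
          linarith [hq3 ▸ hpos]
        have hq1 : (1:ℝ) ≤ (q:ℝ) := by exact_mod_cast hq0
        nlinarith [Real.pi_gt_three]
    exact hseq.frequently (Filter.Eventually.of_forall fun m => h0 _).frequently
  have := han.eqOn_zero_of_preconnected_of_frequently_eq_zero
    isPreconnected_univ (Set.mem_univ (1:ℂ)) hfreq
  exact this (Set.mem_univ w)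

lemma diff_update_line {n : ℕ} (z : Fin n → ℂ) (k₀ : Fin n) :
    Differentiable ℂ (fun w : ℂ => Function.update z k₀ (w * z k₀)) := by
  classical
  apply differentiable_pi.2
  intro i
  by_cases hi : i = k₀
  · subst hi
    have h : (fun w : ℂ => Function.update z i (w * z i) i) = fun w => w * z i := by
      funext w; simp
    rw [h]; exact differentiable_id.mul_const _
  · have h : (fun w : ℂ => Function.update z k₀ (w * z k₀) i) = fun _ => z i := by
      funext w; exact Function.update_of_ne hi _ _
    rw [h]; exact differentiable_const _

lemma hom_of_equivariant {n : ℕ} {F : (Fin n → ℂ) → ℂ} (hF : Differentiable ℂ F) (j : Fin n)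
    (hEQ : ∀ (θ : Fin n → ℝ) (z : Fin n → ℂ),
      F (fun k => Complex.exp ((θ k : ℂ) * Complex.I) * z k)
        = Complex.exp ((θ j : ℂ) * Complex.I) * F z) (z : Fin n → ℂ) :
    F z = F (Pi.single j 1) * z j := by
  classical
  have P1 : ∀ (z : Fin n → ℂ) (k₀ : Fin n), k₀ ≠ j → ∀ w : ℂ,
      F (Function.update z k₀ (w * z k₀)) = F z := by
    intro z k₀ hk₀ w
    have hg : Differentiable ℂ (fun w : ℂ => F (Function.update z k₀ (w * z k₀)) - F z) :=
      (hF.comp (diff_update_line z k₀)).sub_const _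
    have hcirc : ∀ θ : ℝ, F (Function.update z k₀ (Complex.exp (θ * Complex.I) * z k₀)) - F z = 0 := by
      intro θ
      have hvec : Function.update z k₀ (Complex.exp (θ * Complex.I) * z k₀)
          = fun k => Complex.exp (((Pi.single k₀ θ : Fin n → ℝ) k : ℂ) * Complex.I) * z k := by
        funext k
        by_cases hk : k = k₀
        · subst hk; simp
        · rw [Function.update_of_ne hk, Pi.single_eq_of_ne hk]
          simp
      rw [hvec, hEQ (Pi.single k₀ θ) z, Pi.single_eq_of_ne (Ne.symm hk₀)]
      simp
    have := eq_zero_of_circle_zero hg hcirc w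
    exact sub_eq_zero.mp this
  have P2 : ∀ (z : Fin n → ℂ) (w : ℂ),
      F (Function.update z j (w * z j)) = w * F z := by
    intro z w
    have hg : Differentiable ℂ (fun w : ℂ => F (Function.update z j (w * z j)) - w * F z) :=
      (hF.comp (diff_update_line z j)).sub (differentiable_id.mul_const _)
    have hcirc : ∀ θ : ℝ,
        F (Function.update z j (Complex.exp (θ * Complex.I) * z j))
          - Complex.exp (θ * Complex.I) * F z = 0 := by
      intro θ
      have hvec : Function.update z j (Complex.exp (θ * Complex.I) * z j)
          = fun k => Complex.exp (((Pi.single j θ : Fin n → ℝ) k : ℂ) * Complex.I) * z k := by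
        funext k
        by_cases hk : k = j
        · subst hk; simp
        · rw [Function.update_of_ne hk, Pi.single_eq_of_ne hk]
          simp
      rw [hvec, hEQ (Pi.single j θ) z, Pi.single_eq_same]
      ring
    have := eq_zero_of_circle_zero hg hcirc w
    exact sub_eq_zero.mp this
  have hzero : ∀ S : Finset (Fin n), j ∉ S →
      F (fun k => if k ∈ S then 0 else z k) = F z := by
    intro S
    induction S using Finset.induction_on with
    | empty => intro _; simp
    | @insert a S ha ih =>
        intro hj
        have haj : a ≠ j := fun h => hj (h ▸ Finset.mem_insert_self a S)
        have hjS : j ∉ S := fun h => hj (Finset.mem_insert_of_mem h)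
        have hstep := P1 (fun k => if k ∈ S then 0 else z k) a haj 0
        have hvec : Function.update (fun k => if k ∈ S then 0 else z k) a
            ((0:ℂ) * (if a ∈ S then 0 else z a))
            = fun k => if k ∈ insert a S then 0 else z k := by
          funext k
          by_cases hk : k = a
          · subst hk; simp
          · rw [Function.update_of_ne hk]
            simp [Finset.mem_insert, hk]
        rw [hvec] at hstep
        rw [hstep, ih hjS]
  have h1 := hzero (Finset.univ.erase j) (Finset.notMem_erase j _)
  have h2 := P2 (Pi.single j 1 : Fin n → ℂ) (z j)
  have hvec2 : Function.update (Pi.single j 1 : Fin n → ℂ) j (z j * (Pi.single j 1 : Fin n → ℂ) j)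
      = fun k => if k ∈ Finset.univ.erase j then 0 else z k := by
    funext k
    by_cases hk : k = j
    · subst hk; simp
    · rw [Function.update_of_ne hk, Pi.single_eq_of_ne hk]
      simp [Finset.mem_erase, hk]
  rw [hvec2] at h2
  rw [← h1, h2]
  ring

lemma sum_invT_mul {n : ℕ} (H : Matrix (Fin n) (Fin n) ℂ) (hdet : IsUnit H.det)
    (a : Fin n → ℂ) (j : Fin n) :
    ∑ k, H⁻¹.transpose j k * (∑ l, H l k * a l) = a j := by
  have hinv : H * H⁻¹ = 1 := Matrix.mul_nonsing_inv H hdet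
  calc ∑ k, H⁻¹.transpose j k * (∑ l, H l k * a l)
      = ∑ k, ∑ l, H l k * H⁻¹ k j * a l := by
        refine Finset.sum_congr rfl fun k _ => ?_
        rw [Matrix.transpose_apply, Finset.mul_sum]
        refine Finset.sum_congr rfl fun l _ => by ring
    _ = ∑ l, (∑ k, H l k * H⁻¹ k j) * a l := by
        rw [Finset.sum_comm]
        exact Finset.sum_congr rfl fun l _ => by rw [Finset.sum_mul]
    _ = ∑ l, (H * H⁻¹) l j * a l := by
        exact Finset.sum_congr rfl fun l _ => by rw [Matrix.mul_apply]
    _ = a j := by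
        rw [hinv]
        simp [Matrix.one_apply]

lemma sum_recover {n : ℕ} (H : Matrix (Fin n) (Fin n) ℂ) (hdet : IsUnit H.det)
    (b c : Fin n → ℂ) (h : ∀ j, ∑ k, H⁻¹.transpose j k * b k = c j) (k : Fin n) :
    b k = ∑ l, H l k * c l := by
  have hinv : H⁻¹ * H = 1 := Matrix.nonsing_inv_mul H hdet
  calc b k = ∑ m, (H⁻¹ * H) m k * b m := by
        rw [hinv]
        simp [Matrix.one_apply]
    _ = ∑ m, (∑ l, H⁻¹ m l * H l k) * b m := by
        exact Finset.sum_congr rfl fun m _ => by rw [Matrix.mul_apply]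
    _ = ∑ m, ∑ l, H⁻¹ m l * H l k * b m := by
        exact Finset.sum_congr rfl fun m _ => by rw [Finset.sum_mul]
    _ = ∑ l, H l k * (∑ m, H⁻¹.transpose l m * b m) := by
        rw [Finset.sum_comm]
        refine Finset.sum_congr rfl fun l _ => ?_
        rw [Finset.mul_sum]
        refine Finset.sum_congr rfl fun m _ => ?_
        rw [Matrix.transpose_apply]; ring
    _ = ∑ l, H l k * c l := Finset.sum_congr rfl fun l _ => by rw [h l]

lemma rad_rotate {n : ℕ} (θ : Fin n → ℝ) (z : Fin n → ℂ) :
    rad (fun k => Complex.exp ((θ k : ℂ) * Complex.I) * z k) = rad z := by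
  funext i
  simp only [rad, Complex.normSq_mul]
  have h : Complex.normSq (Complex.exp ((θ i : ℂ) * Complex.I)) = 1 := by
    rw [Complex.normSq_eq_norm_sq, Complex.norm_exp_ofReal_mul_I]; norm_num
  rw [h, one_mul]

lemma radialMetric_rotate {n : ℕ} (χ : (Fin n → ℝ) → ℝ) (θ : Fin n → ℝ) (z : Fin n → ℂ) :
    radialMetric χ (fun k => Complex.exp ((θ k : ℂ) * Complex.I) * z k)
      = Matrix.diagonal (fun k => Complex.exp (-(θ k : ℂ) * Complex.I))
          * radialMetric χ z * Matrix.diagonal (fun k => Complex.exp ((θ k : ℂ) * Complex.I)) := by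
  funext j k
  have hconj : (starRingEnd ℂ) (Complex.exp ((θ j : ℂ) * Complex.I))
      = Complex.exp (-(θ j : ℂ) * Complex.I) := by
    rw [← Complex.exp_conj, map_mul, Complex.conj_ofReal, Complex.conj_I]
    ring_nf
  have hee : Complex.exp (-(θ j : ℂ) * Complex.I) * Complex.exp ((θ j : ℂ) * Complex.I) = 1 := by
    rw [← Complex.exp_add]
    norm_num
  simp only [Matrix.mul_diagonal, Matrix.diagonal_mul, radialMetric, rad_rotate, map_mul, hconj]
  by_cases hjk : j = k
  · subst hjk
    simp only [eq_self_iff_true, if_true, mul_one]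
    linear_combination (((pderiv' χ j (rad z) : ℝ) : ℂ)) * hee.symm
  · simp only [if_neg hjk, mul_zero]
    ring

lemma invT_rotate {n : ℕ} (H : Matrix (Fin n) (Fin n) ℂ) (θ : Fin n → ℝ) (j k : Fin n) :
    (Matrix.diagonal (fun k => Complex.exp (-(θ k : ℂ) * Complex.I))
      * H * Matrix.diagonal (fun k => Complex.exp ((θ k : ℂ) * Complex.I)))⁻¹.transpose j k
    = Complex.exp ((θ j : ℂ) * Complex.I) * H⁻¹.transpose j k
        * Complex.exp (-(θ k : ℂ) * Complex.I) := by
  set D := Matrix.diagonal (fun k => Complex.exp ((θ k : ℂ) * Complex.I)) with hD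
  set E := Matrix.diagonal (fun k => Complex.exp (-(θ k : ℂ) * Complex.I)) with hE
  have hprod : ∀ i : Fin n, Complex.exp ((θ i : ℂ) * Complex.I)
      * Complex.exp (-(θ i : ℂ) * Complex.I) = 1 := by
    intro i; rw [← Complex.exp_add]; norm_num
  have hDE : D * E = 1 := by
    rw [hD, hE, Matrix.diagonal_mul_diagonal]
    rw [show (fun i => Complex.exp ((θ i : ℂ) * Complex.I)
      * Complex.exp (-(θ i : ℂ) * Complex.I)) = fun _ : Fin n => (1:ℂ) from funext hprod]
    exact Matrix.diagonal_one
  have hED : E * D = 1 := by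
    rw [hD, hE, Matrix.diagonal_mul_diagonal]
    rw [show (fun i => Complex.exp (-(θ i : ℂ) * Complex.I)
      * Complex.exp ((θ i : ℂ) * Complex.I)) = fun _ : Fin n => (1:ℂ) from
      funext fun i => by rw [mul_comm]; exact hprod i]
    exact Matrix.diagonal_one
  have hDinv : D⁻¹ = E := Matrix.inv_eq_right_inv hDE
  have hEinv : E⁻¹ = D := Matrix.inv_eq_right_inv hED
  have hinv : (E * H * D)⁻¹ = E * H⁻¹ * D := by
    rw [Matrix.mul_inv_rev, Matrix.mul_inv_rev, hDinv, hEinv, Matrix.mul_assoc]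
  rw [hinv]
  rw [Matrix.transpose_apply, Matrix.transpose_apply]
  rw [hD, hE]
  rw [Matrix.mul_diagonal, Matrix.diagonal_mul]
  ring


/-- The candidate potential `Φ_C(r) = Σ_j C_j r_j ∂_jχ(r)`. -/
def PhiFun {n : ℕ} (χ : (Fin n → ℝ) → ℝ) (C : Fin n → ℝ) (r : Fin n → ℝ) : ℝ :=
  ∑ j, C j * (r j * pderiv' χ j r)

/-- for the Kähler metric on `ℂⁿ` with product multi-radial
potential `χ̃(r) = Π Gⱼ(rⱼ)` (assumed positive definite) and a smooth
multi-radial weight `ψ`, the gradient field `(∂̄ψ)^♯` is holomorphic iff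
`ψ(z) = C₀ + Σ Cⱼ |zⱼ|² Gⱼ'(|zⱼ|²) Π_{k≠j} Gₖ(|zₖ|²)`; in that case the `j`-th
component of the gradient field equals `Cⱼ zⱼ`. -/
theorem stmt8 (n : ℕ) (G : Fin n → ℝ → ℝ)
    (hG : ∀ j, ContDiff ℝ (⊤ : ℕ∞) (G j))
    (χ : (Fin n → ℝ) → ℝ) (hχ : ∀ r : Fin n → ℝ, χ r = ∏ j, G j (r j))
    (hpos : ∀ z : Fin n → ℂ, (radialMetric χ z).PosDef)
    (ψt : (Fin n → ℝ) → ℝ) (hψt : ContDiff ℝ (⊤ : ℕ∞) ψt)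
    (ψ : (Fin n → ℂ) → ℝ) (hψ : ∀ z, ψ z = ψt (rad z)) :
    ((∀ j : Fin n,
        Differentiable ℂ
          (fun z => ∑ k, ((radialMetric χ z)⁻¹).transpose j k * wirtZBarR ψ k z)) ↔
      ∃ C₀ : ℝ, ∃ C : Fin n → ℝ,
        ∀ z : Fin n → ℂ,
          ψ z = C₀ + ∑ j, C j * Complex.normSq (z j) *
              deriv (G j) (Complex.normSq (z j)) *
              ∏ k ∈ Finset.univ.erase j, G k (Complex.normSq (z k))) ∧
    (∀ C₀ : ℝ, ∀ C : Fin n → ℝ,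
      (∀ z : Fin n → ℂ,
        ψ z = C₀ + ∑ j, C j * Complex.normSq (z j) *
            deriv (G j) (Complex.normSq (z j)) *
            ∏ k ∈ Finset.univ.erase j, G k (Complex.normSq (z k))) →
      ∀ j : Fin n, ∀ z : Fin n → ℂ,
        (∑ k, ((radialMetric χ z)⁻¹).transpose j k * wirtZBarR ψ k z) =
          ((C j : ℝ) : ℂ) * z j) := by
  classical
  have hχe : χ = fun r : Fin n → ℝ => ∏ j, G j (r j) := funext hχ
  have hχs : ContDiff ℝ (⊤ : ℕ∞) χ := by rw [hχe]; exact contDiff_chi hG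
  have hψfun : ψ = fun z => ψt (rad z) := funext hψ
  have hdet : ∀ z : Fin n → ℂ, IsUnit (radialMetric χ z).det :=
    fun z => (hpos z).det_pos.ne'.isUnit
  have hΦs : ∀ C : Fin n → ℝ, ContDiff ℝ (⊤ : ℕ∞) (PhiFun χ C) := fun C =>
    ContDiff.sum fun j _ => contDiff_const.mul
      (((ContinuousLinearMap.proj (R := ℝ) (φ := fun _ : Fin n => ℝ) j).contDiff).mul
        (contDiff_pderiv' hχs j))
  have hwirtψ : ∀ (k : Fin n) (z : Fin n → ℂ),
      wirtZBarR ψ k z = z k * ((pderiv' ψt k (rad z) : ℝ) : ℂ) := by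
    intro k z
    rw [hψfun]
    exact wirtZBarR_comp_rad hψt k z
  have hKW : ∀ (C : Fin n → ℝ) (k : Fin n) (z : Fin n → ℂ),
      wirtZBarR (fun w => PhiFun χ C (rad w)) k z
        = ∑ l, radialMetric χ z l k * (((C l : ℝ) : ℂ) * z l) := by
    intro C k z
    rw [wirtZBarR_comp_rad (hΦs C) k z]
    have hP : pderiv' (PhiFun χ C) k (rad z)
        = ∑ j, C j * ((if j = k then 1 else 0) * pderiv' χ j (rad z)
            + rad z j * pderiv' (pderiv' χ j) k (rad z)) := pderiv'_Phi hχs C k (rad z)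
    rw [hP]
    push_cast
    rw [Finset.mul_sum]
    refine Finset.sum_congr rfl fun l _ => ?_
    have hc : ((rad z l : ℝ) : ℂ) = (starRingEnd ℂ) (z l) * z l :=
      Complex.normSq_eq_conj_mul_self
    simp only [radialMetric]
    by_cases hl : l = k
    · subst hl
      simp only [eq_self_iff_true, if_true]
      rw [hc]
      push_cast
      ring
    · simp only [if_neg hl]
      rw [hc]
      push_cast
      ring
  have hKM : ∀ (C : Fin n → ℝ) (j : Fin n) (z : Fin n → ℂ),
      (∑ k, ((radialMetric χ z)⁻¹).transpose j k * wirtZBarR (fun w => PhiFun χ C (rad w)) k z)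
        = ((C j : ℝ) : ℂ) * z j := by
    intro C j z
    calc ∑ k, ((radialMetric χ z)⁻¹).transpose j k * wirtZBarR (fun w => PhiFun χ C (rad w)) k z
        = ∑ k, ((radialMetric χ z)⁻¹).transpose j k
            * ∑ l, radialMetric χ z l k * (((C l : ℝ) : ℂ) * z l) :=
          Finset.sum_congr rfl fun k _ => by rw [hKW C k z]
      _ = ((C j : ℝ) : ℂ) * z j := sum_invT_mul _ (hdet z) _ j
  have hform_eq : ∀ (C : Fin n → ℝ) (z : Fin n → ℂ),
      (∑ j, C j * Complex.normSq (z j) * deriv (G j) (Complex.normSq (z j)) *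
          ∏ k ∈ Finset.univ.erase j, G k (Complex.normSq (z k))) = PhiFun χ C (rad z) := by
    intro C z
    refine Finset.sum_congr rfl fun j _ => ?_
    have hp : pderiv' χ j (rad z)
        = deriv (G j) (rad z j) * ∏ k ∈ Finset.univ.erase j, G k (rad z k) := by
      rw [hχe]; exact pderiv'_chi hG j (rad z)
    show C j * Complex.normSq (z j) * deriv (G j) (Complex.normSq (z j)) *
          ∏ k ∈ Finset.univ.erase j, G k (Complex.normSq (z k))
        = C j * (rad z j * pderiv' χ j (rad z))
    rw [hp]
    simp only [rad]
    ring
  have hconj2 : ∀ (C₀ : ℝ) (C : Fin n → ℝ),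
      (∀ z : Fin n → ℂ, ψ z = C₀ + ∑ j, C j * Complex.normSq (z j) *
          deriv (G j) (Complex.normSq (z j)) *
          ∏ k ∈ Finset.univ.erase j, G k (Complex.normSq (z k))) →
      ∀ (j : Fin n) (z : Fin n → ℂ),
        (∑ k, ((radialMetric χ z)⁻¹).transpose j k * wirtZBarR ψ k z)
          = ((C j : ℝ) : ℂ) * z j := by
    intro C₀ C hform j z
    have hψeq : ψ = fun w => C₀ + PhiFun χ C (rad w) := by
      funext w
      rw [hform w, hform_eq C w]
    have hwirt_eq : ∀ k, wirtZBarR ψ k z = wirtZBarR (fun w => PhiFun χ C (rad w)) k z := by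
      intro k
      rw [hψeq]
      exact wirtZBarR_const_add C₀ _ k z
    calc ∑ k, ((radialMetric χ z)⁻¹).transpose j k * wirtZBarR ψ k z
        = ∑ k, ((radialMetric χ z)⁻¹).transpose j k
            * wirtZBarR (fun w => PhiFun χ C (rad w)) k z :=
          Finset.sum_congr rfl fun k _ => by rw [hwirt_eq k]
      _ = ((C j : ℝ) : ℂ) * z j := hKM C j z
  refine ⟨⟨?_, ?_⟩, hconj2⟩
  · -- forward direction
    intro hdiff
    have hEQ : ∀ j : Fin n, ∀ (θ : Fin n → ℝ) (z : Fin n → ℂ),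
        (∑ k, ((radialMetric χ (fun k => Complex.exp ((θ k : ℂ) * Complex.I) * z k))⁻¹).transpose j k
            * wirtZBarR ψ k (fun k => Complex.exp ((θ k : ℂ) * Complex.I) * z k))
          = Complex.exp ((θ j : ℂ) * Complex.I)
            * ∑ k, ((radialMetric χ z)⁻¹).transpose j k * wirtZBarR ψ k z := by
      intro j θ z
      rw [radialMetric_rotate χ θ z, Finset.mul_sum]
      refine Finset.sum_congr rfl fun k _ => ?_
      rw [invT_rotate, hwirtψ k, hwirtψ k z, rad_rotate]
      have hk : Complex.exp (-(θ k : ℂ) * Complex.I) * Complex.exp ((θ k : ℂ) * Complex.I) = 1 := by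
        rw [← Complex.exp_add]; norm_num
      linear_combination (Complex.exp ((θ j : ℂ) * Complex.I)
        * ((radialMetric χ z)⁻¹).transpose j k * z k
        * ((pderiv' ψt k (rad z) : ℝ) : ℂ)) * hk
    set c : Fin n → ℂ := fun j =>
      ∑ k, ((radialMetric χ (Pi.single j 1 : Fin n → ℂ))⁻¹).transpose j k
        * wirtZBarR ψ k (Pi.single j 1 : Fin n → ℂ) with hcdef
    have hFz : ∀ (j : Fin n) (z : Fin n → ℂ),
        (∑ k, ((radialMetric χ z)⁻¹).transpose j k * wirtZBarR ψ k z) = c j * z j := by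
      intro j z
      exact hom_of_equivariant
        (F := fun z => ∑ k, ((radialMetric χ z)⁻¹).transpose j k * wirtZBarR ψ k z)
        (hdiff j) j (fun θ z => hEQ j θ z) z
    have hb : ∀ (z : Fin n → ℂ) (k : Fin n),
        wirtZBarR ψ k z = ∑ l, radialMetric χ z l k * (c l * z l) :=
      fun z k => sum_recover (radialMetric χ z) (hdet z) _ (fun l => c l * z l)
        (fun j => hFz j z) k
    have hreal : ∀ k : Fin n, ∃ t : ℝ, c k = (t : ℂ) := by
      intro k
      have e1 := hb (Pi.single k 1 : Fin n → ℂ) k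
      rw [hwirtψ k] at e1
      have hz1 : (Pi.single k 1 : Fin n → ℂ) k = 1 := Pi.single_eq_same k 1
      rw [hz1, one_mul] at e1
      have e2 : (∑ l, radialMetric χ (Pi.single k 1 : Fin n → ℂ) l k
            * (c l * (Pi.single k 1 : Fin n → ℂ) l))
          = radialMetric χ (Pi.single k 1 : Fin n → ℂ) k k * c k := by
        rw [Finset.sum_eq_single k]
        · rw [hz1, mul_one]
        · intro l _ hl
          rw [Pi.single_eq_of_ne hl, mul_zero, mul_zero]
        · intro h; exact absurd (Finset.mem_univ k) h
      rw [e2] at e1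
      set h0 : ℝ := pderiv' χ k (rad (Pi.single k 1 : Fin n → ℂ))
          + pderiv' (pderiv' χ k) k (rad (Pi.single k 1 : Fin n → ℂ)) with hh0
      have hHkk : radialMetric χ (Pi.single k 1 : Fin n → ℂ) k k = ((h0 : ℝ) : ℂ) := by
        simp only [radialMetric, eq_self_iff_true, if_true, hz1, map_one, one_mul, mul_one, hh0]
        push_cast
        ring
      have hx0 : (Pi.single k 1 : Fin n → ℂ) ≠ 0 := by
        intro hcon
        have h := congrFun hcon k
        rw [Pi.single_eq_same] at h
        exact one_ne_zero h
      have hdot := (hpos (Pi.single k 1 : Fin n → ℂ)).dotProduct_mulVec_pos hx0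
      have hdval : dotProduct (star (Pi.single k 1 : Fin n → ℂ))
          (Matrix.mulVec (radialMetric χ (Pi.single k 1 : Fin n → ℂ)) (Pi.single k 1 : Fin n → ℂ))
          = radialMetric χ (Pi.single k 1 : Fin n → ℂ) k k := by
        unfold dotProduct Matrix.mulVec
        rw [Finset.sum_eq_single k]
        · have hstar : star (Pi.single k 1 : Fin n → ℂ) k = 1 := by
            rw [Pi.star_apply, hz1, star_one]
          rw [hstar, one_mul]
          unfold dotProduct
          rw [Finset.sum_eq_single k]
          · rw [hz1, mul_one]
          · intro l _ hl
            rw [Pi.single_eq_of_ne hl, mul_zero]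
          · intro h; exact absurd (Finset.mem_univ k) h
        · intro l _ hl
          have hstar : star (Pi.single k 1 : Fin n → ℂ) l = 0 := by
            rw [Pi.star_apply, Pi.single_eq_of_ne hl, star_zero]
          rw [hstar, zero_mul]
        · intro h; exact absurd (Finset.mem_univ k) h
      rw [hdval, hHkk] at hdot
      have hh0ne : h0 ≠ 0 := by
        intro hcon
        rw [hcon] at hdot
        simp at hdot
      refine ⟨pderiv' ψt k (rad (Pi.single k 1 : Fin n → ℂ)) / h0, ?_⟩
      rw [hHkk] at e1
      have : c k = ((pderiv' ψt k (rad (Pi.single k 1 : Fin n → ℂ)) : ℝ) : ℂ) / ((h0 : ℝ) : ℂ) := by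
        have hne' : ((h0 : ℝ) : ℂ) ≠ 0 := by exact_mod_cast hh0ne
        rw [e1, mul_comm, mul_div_assoc, div_self hne', mul_one]
      rw [this]
      push_cast
      ring
    choose Ct hCt using hreal
    have hb2 : ∀ (z : Fin n → ℂ) (k : Fin n),
        z k * ((pderiv' ψt k (rad z) : ℝ) : ℂ)
          = z k * ((pderiv' (PhiFun χ Ct) k (rad z) : ℝ) : ℂ) := by
      intro z k
      have h1 := hb z k
      rw [hwirtψ k z] at h1
      have h2 := hKW Ct k z
      rw [wirtZBarR_comp_rad (hΦs Ct) k z] at h2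
      calc z k * ((pderiv' ψt k (rad z) : ℝ) : ℂ)
          = ∑ l, radialMetric χ z l k * (c l * z l) := h1
        _ = ∑ l, radialMetric χ z l k * (((Ct l : ℝ) : ℂ) * z l) :=
            Finset.sum_congr rfl fun l _ => by rw [hCt l]
        _ = z k * ((pderiv' (PhiFun χ Ct) k (rad z) : ℝ) : ℂ) := h2.symm
    have hgs : ContDiff ℝ (⊤ : ℕ∞) (fun r => ψt r - PhiFun χ Ct r) := hψt.sub (hΦs Ct)
    have hpd_g : ∀ (z : Fin n → ℂ) (k : Fin n),
        z k = 0 ∨ pderiv' (fun r => ψt r - PhiFun χ Ct r) k (rad z) = 0 := by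
      intro z k
      rcases eq_or_ne (z k) 0 with h | h
      · exact Or.inl h
      · right
        have h1 := hb2 z k
        have h2 := mul_left_cancel₀ h h1
        have h3 : pderiv' ψt k (rad z) = pderiv' (PhiFun χ Ct) k (rad z) := by exact_mod_cast h2
        have hsub : pderiv' (fun r => ψt r - PhiFun χ Ct r) k (rad z)
            = pderiv' ψt k (rad z) - pderiv' (PhiFun χ Ct) k (rad z) := by
          unfold pderiv'
          rw [fderiv_fun_sub ((hψt.differentiable (by simp)).differentiableAt)
            (((hΦs Ct).differentiable (by simp)).differentiableAt)]
          rfl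
        rw [hsub, h3, sub_self]
    have hfz : ∀ z : Fin n → ℂ, fderiv ℝ (fun w => (fun r => ψt r - PhiFun χ Ct r) (rad w)) z = 0 := by
      intro z
      refine ContinuousLinearMap.ext fun v => ?_
      rw [ContinuousLinearMap.zero_apply]
      have hv : v = ∑ k, Pi.single k (v k) := (Finset.univ_sum_single v).symm
      conv_lhs => rw [hv]
      rw [map_sum]
      refine Finset.sum_eq_zero fun k _ => ?_
      rw [fderiv_comp_rad hgs z k (v k)]
      rcases hpd_g z k with h | h
      · rw [h]; simp
      · rw [h, mul_zero]
    have hdiffg : Differentiable ℝ (fun w : Fin n → ℂ => (fun r => ψt r - PhiFun χ Ct r) (rad w)) :=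
      (hgs.differentiable (by simp)).comp (contDiff_rad.differentiable (by simp))
    refine ⟨ψt (rad (0 : Fin n → ℂ)), Ct, ?_⟩
    intro z
    have hconst := is_const_of_fderiv_eq_zero hdiffg hfz z 0
    rw [hψ z, hform_eq Ct z]
    have hrad0 : rad (0 : Fin n → ℂ) = 0 := funext fun i => by simp [rad]
    have hΦ0 : PhiFun χ Ct (rad (0 : Fin n → ℂ)) = 0 := by
      rw [hrad0]
      unfold PhiFun
      simp
    simp only at hconst
    rw [hΦ0] at hconst
    linarith [hconst]
  · -- backward direction of the iff
    rintro ⟨C₀, C, hform⟩ j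
    have h : (fun z : Fin n → ℂ => ∑ k, ((radialMetric χ z)⁻¹).transpose j k * wirtZBarR ψ k z)
        = fun z : Fin n → ℂ => ((C j : ℝ) : ℂ) * z j :=
      funext fun z => hconj2 C₀ C hform j z
    rw [h]
    exact ((ContinuousLinearMap.proj (R := ℂ) (φ := fun _ : Fin n => ℂ) j).differentiable).const_mul _
end
end

section
/- Let χ̃ : [0,∞)ⁿ → ℝ be smooth with (∂χ̃/∂r_j)(0) > 0 for all j, and for z ∈ ℂⁿ set r = (|z_1|²,…,|z_n|²) and H(z)_{jk} = (∂χ̃/∂r_j)(r) δ_{jk} + z̄_j z_k (∂²χ̃/∂r_j∂r_k)(r). Then there exist ε > 0 and real-valued functions V_{jk}(r_1,…,r_n), smooth on a neighborhood of 0 in [0,∞)ⁿ, such that for all z with |z| < ε the matrix H(z) is invertible and the transpose of its inverse is given by (H(z)^{-T})_{jk} = ((∂χ̃/∂r_j)(r))^{-1} δ_{jk} + V_{jk}(r) z_j z̄_k. -/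
open Complex MeasureTheory Finset

noncomputable section

/- ### Auxiliary material -/

lemma pderiv'_contDiff {n : ℕ} {χ : (Fin n → ℝ) → ℝ} (hχ : ContDiff ℝ (⊤ : ℕ∞) χ) (j : Fin n) :
    ContDiff ℝ (⊤ : ℕ∞) (pderiv' χ j) := by
  have h1 : ContDiff ℝ (⊤ : ℕ∞) (fderiv ℝ χ) := hχ.fderiv_right (by exact_mod_cast le_top)
  exact (ContinuousLinearMap.apply ℝ ℝ (Pi.single j 1)).contDiff.comp h1

lemma contDiffOn_matrix_det {n m : ℕ} {s : Set (Fin n → ℝ)}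
    {f : (Fin n → ℝ) → Matrix (Fin m) (Fin m) ℝ}
    (h : ∀ i j, ContDiffOn ℝ (⊤ : ℕ∞) (fun r => f r i j) s) :
    ContDiffOn ℝ (⊤ : ℕ∞) (fun r => (f r).det) s := by
  simp only [Matrix.det_apply']
  exact ContDiffOn.sum fun σ _ => contDiffOn_const.mul
    (contDiffOn_prod fun i _ => h (σ i) i)

lemma contDiffOn_inv_entry {n m : ℕ} {s : Set (Fin n → ℝ)}
    {f : (Fin n → ℝ) → Matrix (Fin m) (Fin m) ℝ}
    (h : ∀ i j, ContDiffOn ℝ (⊤ : ℕ∞) (fun r => f r i j) s)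
    (hdet : ∀ r ∈ s, (f r).det ≠ 0) (i j : Fin m) :
    ContDiffOn ℝ (⊤ : ℕ∞) (fun r => (f r)⁻¹ i j) s := by
  have h1 : ∀ r, (f r)⁻¹ i j = (f r).det⁻¹ * (f r).adjugate i j := by
    intro r
    rw [Matrix.inv_def, Ring.inverse_eq_inv', Matrix.smul_apply, smul_eq_mul]
  simp only [h1]
  refine ((contDiffOn_matrix_det h).inv hdet).mul ?_
  simp only [Matrix.adjugate_apply]
  apply contDiffOn_matrix_det
  intro a b
  simp only [Matrix.updateRow_apply]
  rcases eq_or_ne a j with rfl | hne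
  · simp only [if_pos rfl]; exact contDiffOn_const
  · simp only [if_neg hne]; exact h a b

/-- The Hessian matrix `M(r)ⱼₖ = ∂²χ̃/∂rⱼ∂rₖ`. -/
def Mmat {n : ℕ} (χ : (Fin n → ℝ) → ℝ) (r : Fin n → ℝ) : Matrix (Fin n) (Fin n) ℝ :=
  Matrix.of fun j k => pderiv' (pderiv' χ j) k r

/-- The diagonal matrix of first derivatives. -/
def Dmat {n : ℕ} (χ : (Fin n → ℝ) → ℝ) (r : Fin n → ℝ) : Matrix (Fin n) (Fin n) ℝ :=
  Matrix.diagonal fun j => pderiv' χ j r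

/-- The diagonal matrix of inverted first derivatives. -/
def Dinvmat {n : ℕ} (χ : (Fin n → ℝ) → ℝ) (r : Fin n → ℝ) : Matrix (Fin n) (Fin n) ℝ :=
  Matrix.diagonal fun j => (pderiv' χ j r)⁻¹

/-- `W(r) = D(r) + M(r)·diag(r)`. -/
def Wmat {n : ℕ} (χ : (Fin n → ℝ) → ℝ) (r : Fin n → ℝ) : Matrix (Fin n) (Fin n) ℝ :=
  Dmat χ r + Mmat χ r * Matrix.diagonal r

/-- `V₀(r) = -W(r)⁻¹ M(r) D(r)⁻¹`. -/
def V0mat {n : ℕ} (χ : (Fin n → ℝ) → ℝ) (r : Fin n → ℝ) : Matrix (Fin n) (Fin n) ℝ :=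
  -((Wmat χ r)⁻¹ * Mmat χ r * Dinvmat χ r)

/-- The coefficient matrix appearing in the inverse metric. -/
def Vmat {n : ℕ} (χ : (Fin n → ℝ) → ℝ) (r : Fin n → ℝ) : Matrix (Fin n) (Fin n) ℝ :=
  (V0mat χ r).transpose

/-- complexification of a real matrix -/
def cplx {n : ℕ} : Matrix (Fin n) (Fin n) ℝ →+* Matrix (Fin n) (Fin n) ℂ :=
  (Complex.ofRealHom).mapMatrix

lemma cplx_apply {n : ℕ} (A : Matrix (Fin n) (Fin n) ℝ) (i j : Fin n) :
    cplx A i j = ((A i j : ℝ) : ℂ) := rfl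

lemma cplx_diagonal {n : ℕ} (f : Fin n → ℝ) :
    cplx (Matrix.diagonal f) = Matrix.diagonal (fun i => ((f i : ℝ) : ℂ)) := by
  simp only [cplx, RingHom.mapMatrix_apply]
  exact Matrix.diagonal_map (by simp)

lemma diag_comm {n : ℕ} (a b : Fin n → ℂ) :
    Matrix.diagonal a * Matrix.diagonal b = Matrix.diagonal b * Matrix.diagonal a := by
  rw [Matrix.diagonal_mul_diagonal, Matrix.diagonal_mul_diagonal]
  exact congrArg _ (funext fun i => mul_comm (a i) (b i))

/-- near the origin the transposed inverse of the multi-radial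
Kähler metric `H(z)` has the form
`(H(z)^{-T})ⱼₖ = (∂χ̃/∂rⱼ)⁻¹ δⱼₖ + Vⱼₖ(r) zⱼ z̄ₖ` with real-valued functions
`Vⱼₖ` smooth near `0`. -/
theorem stmt9 (n : ℕ) (χ : (Fin n → ℝ) → ℝ) (hχ : ContDiff ℝ (⊤ : ℕ∞) χ)
    (hχpos : ∀ j : Fin n, 0 < pderiv' χ j 0) :
    ∃ ε > (0 : ℝ), ∃ V : (Fin n → ℝ) → Matrix (Fin n) (Fin n) ℝ,
      (∀ j k : Fin n,
        ContDiffOn ℝ (⊤ : ℕ∞) (fun r => V r j k) {r : Fin n → ℝ | ∀ i, |r i| < ε}) ∧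
      (∀ z : Fin n → ℂ, (∀ i, Complex.normSq (z i) < ε) →
        IsUnit (radialMetric χ z) ∧
        ∀ j k : Fin n,
          ((radialMetric χ z)⁻¹).transpose j k =
            (((pderiv' χ j (rad z))⁻¹ : ℝ) : ℂ) * (if j = k then 1 else 0) +
              ((V (rad z) j k : ℝ) : ℂ) * z j * (starRingEnd ℂ) (z k)) := by
  classical
  -- smoothness of the entries of W
  have hWentry : ∀ i j : Fin n, ContDiff ℝ (⊤ : ℕ∞) (fun r => Wmat χ r i j) := by
    intro i j
    have : (fun r => Wmat χ r i j) =
        fun r => (if i = j then pderiv' χ i r else 0) + pderiv' (pderiv' χ i) j r * r j := by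
      funext r
      simp [Wmat, Dmat, Mmat, Matrix.add_apply, Matrix.diagonal_apply, Matrix.mul_diagonal]
    rw [this]
    have hM : ContDiff ℝ (⊤ : ℕ∞) (fun r : Fin n → ℝ => pderiv' (pderiv' χ i) j r * r j) :=
      (pderiv'_contDiff (pderiv'_contDiff hχ i) j).mul (contDiff_apply ℝ ℝ j)
    rcases eq_or_ne i j with rfl | hne
    · simpa using (pderiv'_contDiff hχ i).add hM
    · simp only [if_neg hne, zero_add]; exact hM
  -- the test function g
  set g : (Fin n → ℝ) → ℝ := fun r => (Wmat χ r).det * ∏ j, pderiv' χ j r with hg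
  have hgsm : ContDiff ℝ (⊤ : ℕ∞) g := by
    refine ContDiff.mul ?_ (contDiff_prod fun j _ => pderiv'_contDiff hχ j)
    exact contDiffOn_univ.mp (contDiffOn_matrix_det fun i j => (hWentry i j).contDiffOn)
  have hg0 : g 0 ≠ 0 := by
    have hW0 : Wmat χ 0 = Dmat χ 0 := by
      ext i j
      simp [Wmat, Matrix.add_apply, Matrix.mul_diagonal]
    have hprod : (0 : ℝ) < ∏ j, pderiv' χ j 0 := Finset.prod_pos fun j _ => hχpos j
    have : g 0 = (∏ j, pderiv' χ j 0) * ∏ j, pderiv' χ j 0 := by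
      rw [hg]; simp only [hW0, Dmat, Matrix.det_diagonal]
    rw [this]
    positivity
  -- choose ε
  have hopen : IsOpen {r : Fin n → ℝ | g r ≠ 0} :=
    isOpen_compl_singleton.preimage hgsm.continuous
  obtain ⟨ε, hε, hball⟩ := Metric.isOpen_iff.mp hopen 0 hg0
  have hS : ∀ r : Fin n → ℝ, (∀ i, |r i| < ε) → g r ≠ 0 := by
    intro r hr
    apply hball
    rw [Metric.mem_ball, dist_zero_right]
    exact (pi_norm_lt_iff hε).mpr (by simpa [Real.norm_eq_abs] using hr)
  have hdetS : ∀ r : Fin n → ℝ, (∀ i, |r i| < ε) → (Wmat χ r).det ≠ 0 :=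
    fun r hr => left_ne_zero_of_mul (hS r hr)
  have hdS : ∀ r : Fin n → ℝ, (∀ i, |r i| < ε) → ∀ j, pderiv' χ j r ≠ 0 := by
    intro r hr j
    exact Finset.prod_ne_zero_iff.mp (right_ne_zero_of_mul (hS r hr)) j (Finset.mem_univ j)
  refine ⟨ε, hε, Vmat χ, ?_, ?_⟩
  · -- smoothness of V
    intro j k
    have hform : ∀ r : Fin n → ℝ,
        Vmat χ r j k = -((∑ p, (Wmat χ r)⁻¹ k p * Mmat χ r p j) * (pderiv' χ j r)⁻¹) := by
      intro r
      rw [Vmat, Matrix.transpose_apply, V0mat, Matrix.neg_apply, Dinvmat,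
        Matrix.mul_diagonal, Matrix.mul_apply]
    simp only [hform]
    apply ContDiffOn.neg
    refine ContDiffOn.mul ?_ (((pderiv'_contDiff hχ j).contDiffOn).inv
      (fun r hr => hdS r hr j))
    refine ContDiffOn.sum fun p _ => ContDiffOn.mul ?_
      ((pderiv'_contDiff (pderiv'_contDiff hχ p) j).contDiffOn)
    exact contDiffOn_inv_entry (fun a b => (hWentry a b).contDiffOn) hdetS k p
  · -- the inverse formula
    intro z hz
    set r : Fin n → ℝ := rad z with hrdef
    have hrS : ∀ i, |r i| < ε := by
      intro i
      rw [hrdef]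
      show |Complex.normSq (z i)| < ε
      rw [_root_.abs_of_nonneg (Complex.normSq_nonneg (z i))]
      exact hz i
    have hdet := hdetS r hrS
    have hd := hdS r hrS
    -- the key real identity
    have hWV : Wmat χ r * V0mat χ r = -(Mmat χ r * Dinvmat χ r) := by
      have hWinv : Wmat χ r * (Wmat χ r)⁻¹ = 1 :=
        Matrix.mul_nonsing_inv _ (Ne.isUnit hdet)
      show Wmat χ r * -((Wmat χ r)⁻¹ * Mmat χ r * Dinvmat χ r) = _
      rw [mul_neg, ← Matrix.mul_assoc, ← Matrix.mul_assoc, hWinv, Matrix.one_mul]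
    have key : Dmat χ r * V0mat χ r + Mmat χ r * Dinvmat χ r +
        Mmat χ r * Matrix.diagonal r * V0mat χ r = 0 := by
      have h2 : Dmat χ r * V0mat χ r + Mmat χ r * Matrix.diagonal r * V0mat χ r =
          Wmat χ r * V0mat χ r := (Matrix.add_mul _ _ _).symm
      have : Dmat χ r * V0mat χ r + Mmat χ r * Dinvmat χ r +
          Mmat χ r * Matrix.diagonal r * V0mat χ r =
          (Dmat χ r * V0mat χ r + Mmat χ r * Matrix.diagonal r * V0mat χ r) +
          Mmat χ r * Dinvmat χ r := by abel
      rw [this, h2, hWV]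
      simp
    have hDDi : Dmat χ r * Dinvmat χ r = 1 := by
      rw [Dmat, Dinvmat, Matrix.diagonal_mul_diagonal]
      rw [show (fun i => pderiv' χ i r * (pderiv' χ i r)⁻¹) = fun _ => (1 : ℝ) from
        funext fun i => mul_inv_cancel₀ (hd i)]
      exact Matrix.diagonal_one
    -- complexify
    set Z : Matrix (Fin n) (Fin n) ℂ := Matrix.diagonal z with hZdef
    set Zb : Matrix (Fin n) (Fin n) ℂ :=
      Matrix.diagonal (fun i => (starRingEnd ℂ) (z i)) with hZbdef
    set A : Matrix (Fin n) (Fin n) ℂ := cplx (Dmat χ r) with hAdef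
    set Ai : Matrix (Fin n) (Fin n) ℂ := cplx (Dinvmat χ r) with hAidef
    set B : Matrix (Fin n) (Fin n) ℂ := cplx (Mmat χ r) with hBdef
    set Vc : Matrix (Fin n) (Fin n) ℂ := cplx (V0mat χ r) with hVcdef
    set Rc : Matrix (Fin n) (Fin n) ℂ := cplx (Matrix.diagonal r) with hRcdef
    have hZZb : Z * Zb = Rc := by
      rw [hZdef, hZbdef, hRcdef, Matrix.diagonal_mul_diagonal, cplx_diagonal]
      refine congrArg _ (funext fun i => ?_)
      simp [hrdef, rad, Complex.mul_conj]
    have hAZb : A * Zb = Zb * A := by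
      rw [hAdef, Dmat, cplx_diagonal]; exact diag_comm _ _
    have hZAi : Z * Ai = Ai * Z := by
      rw [hAidef, Dinvmat, cplx_diagonal]; exact diag_comm _ _
    have hH : radialMetric χ z = A + Zb * B * Z := by
      ext j k
      simp only [radialMetric, Matrix.add_apply, Matrix.mul_diagonal, Matrix.diagonal_mul,
        hAdef, hBdef, hZdef, hZbdef, cplx_apply, Dmat, Mmat, Matrix.diagonal_apply,
        Matrix.of_apply, ← hrdef]
      rcases eq_or_ne j k with rfl | hne
      · simp; ring
      · simp [hne]; ring
    set K : Matrix (Fin n) (Fin n) ℂ := Ai + Zb * Vc * Z with hKdef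
    have hkeyC : A * Vc + B * Ai + B * Rc * Vc = 0 := by
      rw [hAdef, hAidef, hBdef, hVcdef, hRcdef, ← map_mul, ← map_mul, ← map_mul, ← map_mul,
        ← map_add, ← map_add, key, map_zero]
    have hAAi : A * Ai = 1 := by
      rw [hAdef, hAidef, ← map_mul, hDDi, map_one]
    have hHK : radialMetric χ z * K = 1 := by
      rw [hH, hKdef]
      have t2 : A * (Zb * Vc * Z) = Zb * (A * Vc) * Z := by
        simp only [Matrix.mul_assoc]
        rw [← Matrix.mul_assoc A Zb, hAZb, Matrix.mul_assoc]
      have t3 : Zb * B * Z * Ai = Zb * (B * Ai) * Z := by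
        simp only [Matrix.mul_assoc]
        rw [hZAi]
      have t4 : Zb * B * Z * (Zb * Vc * Z) = Zb * (B * Rc * Vc) * Z := by
        simp only [Matrix.mul_assoc]
        rw [← Matrix.mul_assoc Z Zb, hZZb]
      calc (A + Zb * B * Z) * (Ai + Zb * Vc * Z)
          = A * Ai + (A * (Zb * Vc * Z) + (Zb * B * Z * Ai + Zb * B * Z * (Zb * Vc * Z))) := by
            simp only [Matrix.add_mul, Matrix.mul_add]; abel
        _ = 1 + (Zb * (A * Vc) * Z + (Zb * (B * Ai) * Z + Zb * (B * Rc * Vc) * Z)) := by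
            rw [hAAi, t2, t3, t4]
        _ = 1 + Zb * (A * Vc + B * Ai + B * Rc * Vc) * Z := by
            simp only [Matrix.mul_add, Matrix.add_mul]; abel
        _ = 1 := by rw [hkeyC]; simp
    have hKH : K * radialMetric χ z = 1 := mul_eq_one_comm.mp hHK
    refine ⟨⟨⟨radialMetric χ z, K, hHK, hKH⟩, rfl⟩, ?_⟩
    intro j k
    rw [Matrix.transpose_apply, Matrix.inv_eq_right_inv hHK, hKdef]
    have : (Zb * Vc * Z) k j = (starRingEnd ℂ) (z k) * ((V0mat χ r k j : ℝ) : ℂ) * z j := by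
      simp only [hZdef, hZbdef, hVcdef, Matrix.mul_diagonal, Matrix.diagonal_mul, cplx_apply]
    rw [Matrix.add_apply, this, hAidef, Dinvmat, cplx_diagonal, Matrix.diagonal_apply]
    have hVt : Vmat χ (rad z) j k = V0mat χ r k j := by
      rw [hrdef]; simp [Vmat, Matrix.transpose_apply]
    rw [hVt]
    rcases eq_or_ne j k with rfl | hne
    · simp; ring
    · simp [hne, Ne.symm hne]; ring
end
end
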